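/- arXiv:2307.10131 — 3 statements merged into one kernel-verified Lean document; each statement's English description precedes it below -/
import Mathlib

section
/- Let t be a finite ordered tree, S a zone of t, m ≥ 2 a number, and suppose S has more than m nodes. Then S can be partitioned into at most five zones, one of which has at least m/2 and at most m nodes. -/
/-- Finite ordered unranked trees over an alphabet `α`. -/
inductive OTree (α : Type) : Type
  | node : α → List (OTree α) → OTree α

namespace OTree

/-- The subtree of a tree at a path of child indices, if it exists. -/
def subtreeAux {α : Type} : List ℕ → OTree α → Option (OTree α)
  | [], t => some t
  | i :: p, node _ ts => (ts[i]?).bind (subtreeAux p)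

def subtree {α : Type} (t : OTree α) (p : List ℕ) : Option (OTree α) := subtreeAux p t

/-- `p` is (the path of) a node of `t`. -/
def IsNode {α : Type} (t : OTree α) (p : List ℕ) : Prop := (subtree t p).isSome

/-- The set of nodes (represented by their paths) of `t`. -/
def nodes {α : Type} (t : OTree α) : Set (List ℕ) := {p | IsNode t p}

/-- The number of children of the node `p` of `t`. -/
def numChildren {α : Type} (t : OTree α) (p : List ℕ) : ℕ :=
  match subtree t p with
  | some (node _ ts) => ts.length
  | none => 0

/-- A zone of `t`: a proper subforest (its top nodes form a consecutive interval of
siblings), each node has all or none of its children in the zone, and there is at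
most one vertical connection node (a node whose children are outside the zone). -/
def IsZone {α : Type} (t : OTree α) (S : Set (List ℕ)) : Prop :=
  (∀ p ∈ S, IsNode t p) ∧
  (∀ p ∈ S, (∀ i < numChildren t p, p ++ [i] ∈ S) ∨ (∀ i < numChildren t p, p ++ [i] ∉ S)) ∧
  {p | p ∈ S ∧ 0 < numChildren t p ∧ ∀ i < numChildren t p, p ++ [i] ∉ S}.Subsingleton ∧
  (∀ p ∈ S, ∀ q ∈ S, p ≠ [] → q ≠ [] → p.dropLast ∉ S → q.dropLast ∉ S →
    p.dropLast = q.dropLast ∧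
    ∀ i, p.getLastD 0 ≤ i → i ≤ q.getLastD 0 → p.dropLast ++ [i] ∈ S)

/-- A partition of the zone `S` into the zones collected in `Z`. -/
def IsZonePartition {α : Type} (t : OTree α) (S : Set (List ℕ))
    (Z : Finset (Set (List ℕ))) : Prop :=
  (∀ A ∈ Z, IsZone t A) ∧
  ((Z : Set (Set (List ℕ))).PairwiseDisjoint id) ∧
  ⋃₀ (Z : Set (Set (List ℕ))) = S

end OTree

namespace ZoneAux
open OTree List

/-! ### List lemmas -/

lemma pre_of_le {p q r : List ℕ} (h1 : p <+: r) (h2 : q <+: r) (h : p.length ≤ q.length) :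
    p <+: q := by
  rcases List.prefix_or_prefix_of_prefix h1 h2 with h' | h'
  · exact h'
  · exact (h'.eq_of_length (le_antisymm h'.length_le h)).symm ▸ List.prefix_refl _

lemma eq_of_pre_pre {p q : List ℕ} (h1 : p <+: q) (h2 : q <+: p) : p = q :=
  h1.eq_of_length (le_antisymm h1.length_le h2.length_le)

lemma concat_ne_nil (x : List ℕ) (i : ℕ) : x ++ [i] ≠ [] := by
  simp

lemma idx_eq_of_pre {π : List ℕ} {i i' : ℕ} {q : List ℕ}
    (h1 : π ++ [i] <+: q) (h2 : π ++ [i'] <+: q) : i = i' := by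
  have := pre_of_le h1 h2 (by simp)
  have := eq_of_pre_pre this (pre_of_le h2 h1 (by simp))
  simpa using this

lemma exists_cons_of_proper_pre {x q : List ℕ} (h : x <+: q) (hne : x ≠ q) :
    ∃ c r, q = x ++ c :: r := by
  obtain ⟨tl, rfl⟩ := h
  cases tl with
  | nil => simp at hne
  | cons c r => exact ⟨c, r, rfl⟩

/-- longest common prefix -/
def lcp : List ℕ → List ℕ → List ℕ
  | x :: xs, y :: ys => if x = y then x :: lcp xs ys else []
  | _, _ => []

lemma lcp_pre_left : ∀ l1 l2 : List ℕ, lcp l1 l2 <+: l1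
  | [], _ => by simp [lcp]
  | _ :: _, [] => by simp [lcp]
  | x :: xs, y :: ys => by
    by_cases h : x = y
    · rw [lcp, if_pos h]
      exact List.cons_prefix_cons.2 ⟨rfl, lcp_pre_left xs ys⟩
    · simp [lcp, h]

lemma lcp_pre_right : ∀ l1 l2 : List ℕ, lcp l1 l2 <+: l2
  | [], _ => by simp [lcp]
  | _ :: _, [] => by simp [lcp]
  | x :: xs, y :: ys => by
    by_cases h : x = y
    · subst h
      rw [lcp, if_pos rfl]
      exact List.cons_prefix_cons.2 ⟨rfl, lcp_pre_right xs ys⟩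
    · simp [lcp, h]

lemma pre_lcp : ∀ {p l1 l2 : List ℕ}, p <+: l1 → p <+: l2 → p <+: lcp l1 l2
  | [], _, _, _, _ => by simp
  | a :: p, [], l2, h1, _ => by simp at h1
  | a :: p, l1, [], _, h2 => by simp at h2
  | a :: p, x :: xs, y :: ys, h1, h2 => by
    rw [List.cons_prefix_cons] at h1 h2
    obtain ⟨rfl, h1⟩ := h1
    obtain ⟨he, h2⟩ := h2
    subst he
    rw [lcp, if_pos rfl, List.cons_prefix_cons]
    exact ⟨rfl, pre_lcp h1 h2⟩

lemma lcp_spec : ∀ {l1 l2 : List ℕ}, ¬ l1 <+: l2 → ¬ l2 <+: l1 →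
    ∃ a b t1 t2, l1 = lcp l1 l2 ++ a :: t1 ∧ l2 = lcp l1 l2 ++ b :: t2 ∧ a ≠ b
  | [], l2, h1, _ => absurd (List.nil_prefix) h1
  | l1, [], _, h2 => absurd (List.nil_prefix) h2
  | x :: xs, y :: ys, h1, h2 => by
    by_cases h : x = y
    · subst h
      have h1' : ¬ xs <+: ys := fun hc => h1 (List.cons_prefix_cons.2 ⟨rfl, hc⟩)
      have h2' : ¬ ys <+: xs := fun hc => h2 (List.cons_prefix_cons.2 ⟨rfl, hc⟩)
      obtain ⟨a, b, t1, t2, e1, e2, hab⟩ := lcp_spec h1' h2'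
      exact ⟨a, b, t1, t2, by rw [lcp, if_pos rfl]; simpa using e1,
        by rw [lcp, if_pos rfl]; simpa using e2, hab⟩
    · exact ⟨x, y, xs, ys, by simp [lcp, h], by simp [lcp, h], h⟩

/-! ### subtree lemmas -/

lemma subtreeAux_append {α : Type} (p q : List ℕ) : ∀ (u : OTree α),
    subtreeAux (p ++ q) u = (subtreeAux p u).bind (subtreeAux q) := by
  induction p with
  | nil => intro u; simp [subtreeAux]
  | cons i p ih =>
    intro u
    cases u with
    | node a ts =>
      simp only [List.cons_append, subtreeAux]
      cases ts[i]? with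
      | none => simp
      | some v => simp [ih v]

lemma lt_numChildren_of_isNode {α : Type} {t : OTree α} {x : List ℕ} {i : ℕ}
    (h : IsNode t (x ++ [i])) : i < numChildren t x := by
  unfold IsNode subtree at h
  rw [subtreeAux_append] at h
  unfold numChildren subtree
  cases hs : subtreeAux x t with
  | none => rw [hs] at h; simp at h
  | some u =>
    rw [hs] at h
    cases u with
    | node a ts =>
      cases hts : ts[i]? with
      | none => simp [subtreeAux, hts] at h
      | some v => exact (List.getElem?_eq_some_iff.1 hts).1

end ZoneAux

namespace ZoneAux
open OTree List

variable {α : Type}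

/-! ### Basic zone sets -/

section Defs
variable (S : Set (List ℕ))

/-- chain-connected subtree of `S` below `x` (including `x`). -/
def Tset (x : List ℕ) : Set (List ℕ) :=
  {q | q ∈ S ∧ x <+: q ∧ ∀ a, x <+: a → a <+: q → a ∈ S}

/-- strict chain-connected descendants. -/
def Dn (x : List ℕ) : Set (List ℕ) := Tset S x \ {x}

/-- forest of sibling subtrees `x ++ [i]`, `j ≤ i < k`. -/
def Fo (π : List ℕ) (j k : ℕ) : Set (List ℕ) :=
  {q | ∃ i, j ≤ i ∧ i < k ∧ q ∈ Tset S (π ++ [i])}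

noncomputable def sig (x : List ℕ) : ℕ := (Tset S x).ncard

end Defs

def Conn (t : OTree α) (S : Set (List ℕ)) : Set (List ℕ) :=
  {p | p ∈ S ∧ 0 < numChildren t p ∧ ∀ i < numChildren t p, p ++ [i] ∉ S}

variable {S : Set (List ℕ)}

lemma tset_subset (x : List ℕ) : Tset S x ⊆ S := fun _ h => h.1

lemma dn_subset (x : List ℕ) : Dn S x ⊆ S := fun _ h => h.1.1

lemma fo_subset (π : List ℕ) (j k : ℕ) : Fo S π j k ⊆ S := by
  rintro q ⟨i, _, _, hq⟩; exact hq.1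

lemma mem_tset_self {x : List ℕ} (hx : x ∈ S) : x ∈ Tset S x :=
  ⟨hx, List.prefix_refl x, fun a h1 h2 => (eq_of_pre_pre h1 h2) ▸ hx⟩

lemma tset_base {x q : List ℕ} (h : q ∈ Tset S x) : x ∈ S :=
  h.2.2 x (List.prefix_refl x) h.2.1

lemma tset_trans {x z q : List ℕ} (hq : q ∈ Tset S z) (hzx : z ∈ Tset S x) :
    q ∈ Tset S x := by
  refine ⟨hq.1, hzx.2.1.trans hq.2.1, fun a h1 h2 => ?_⟩
  rcases List.prefix_or_prefix_of_prefix h2 hq.2.1 with h' | h'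
  · rcases List.prefix_or_prefix_of_prefix h' (List.prefix_refl z) with h'' | h''
    · exact hzx.2.2 a h1 h''
    · exact hq.2.2 a h'' h2
  · exact hq.2.2 a h' h2

lemma dn_length {x q : List ℕ} (h : q ∈ Dn S x) : x.length < q.length := by
  rcases Nat.lt_or_ge x.length q.length with h' | h'
  · exact h'
  · exact absurd (h.1.2.1.eq_of_length (le_antisymm h.1.2.1.length_le h')) (fun he => h.2 (by simp [← he]))

lemma tset_child {q : List ℕ} {c : ℕ} (hq : q ∈ S) (hc : q ++ [c] ∈ S) :
    q ++ [c] ∈ Tset S q := by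
  refine ⟨hc, List.prefix_append q [c], fun a h1 h2 => ?_⟩
  rcases List.prefix_concat_iff.1 h2 with rfl | h3
  · exact hc
  · exact (eq_of_pre_pre h1 h3) ▸ hq

lemma dn_child {q : List ℕ} {c : ℕ} (hq : q ∈ S) (hc : q ++ [c] ∈ S) :
    q ++ [c] ∈ Dn S q :=
  ⟨tset_child hq hc, by simp⟩

/-- if a child of `q` is in `Dn y` then `q = y` or `q ∈ Dn y`. -/
lemma dn_parent {q y : List ℕ} {c : ℕ} (hq : q ∈ S) (h : q ++ [c] ∈ Dn S y) :
    q = y ∨ q ∈ Dn S y := by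
  rcases List.prefix_concat_iff.1 h.1.2.1 with h' | h'
  · exact absurd h'.symm h.2
  · by_cases hqy : q = y
    · exact Or.inl hqy
    · refine Or.inr ⟨⟨hq, h', fun a h1 h2 => h.1.2.2 a h1 (h2.trans (List.prefix_append q [c]))⟩, hqy⟩

lemma dn_dropLast {q y : List ℕ} (hq : q ∈ S) (hne : q ≠ []) (h : q.dropLast ∈ Dn S y) :
    q ∈ Dn S y := by
  have hdq : q.dropLast <+: q := List.dropLast_prefix q
  have hlen : q.dropLast.length < q.length := by
    rw [List.length_dropLast]
    have : 0 < q.length := List.length_pos_iff.2 hne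
    omega
  refine ⟨⟨hq, h.1.2.1.trans hdq, fun a h1 h2 => ?_⟩, ?_⟩
  · rcases Nat.lt_or_ge a.length q.length with h' | h'
    · have ha : a <+: q.dropLast := pre_of_le h2 hdq (by rw [List.length_dropLast]; omega)
      exact h.1.2.2 a h1 ha
    · exact (h2.eq_of_length (le_antisymm h2.length_le h')) ▸ hq
  · intro hcon
    rw [Set.mem_singleton_iff] at hcon
    subst hcon
    have hl := dn_length h
    rw [List.length_dropLast] at hl
    omega

lemma tset_idx {π : List ℕ} {i i' : ℕ} {q : List ℕ}
    (h : q ∈ Tset S (π ++ [i])) (h' : q ∈ Tset S (π ++ [i'])) : i = i' :=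
  idx_eq_of_pre h.2.1 h'.2.1

lemma fo_disjoint {π : List ℕ} {j k j' k' : ℕ} (h : k ≤ j') :
    Disjoint (Fo S π j k) (Fo S π j' k') := by
  rw [Set.disjoint_left]
  rintro q ⟨i, hj, hk, hq⟩ ⟨i', hj', hk', hq'⟩
  have := tset_idx hq hq'
  omega

lemma tset_sub_fo {π : List ℕ} {i j k : ℕ} (h1 : j ≤ i) (h2 : i < k) :
    Tset S (π ++ [i]) ⊆ Fo S π j k := fun q hq => ⟨i, h1, h2, hq⟩

lemma dn_sub_tset {x z : List ℕ} (hz : z ∈ Tset S x) : Dn S z ⊆ Tset S x :=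
  fun q hq => tset_trans hq.1 hz

lemma fo_split {π : List ℕ} {j l k : ℕ} (h1 : j ≤ l) (h2 : l ≤ k) :
    Fo S π j k = Fo S π j l ∪ Fo S π l k := by
  ext q
  constructor
  · rintro ⟨i, hj, hk, hq⟩
    rcases Nat.lt_or_ge i l with h' | h'
    · exact Or.inl ⟨i, hj, h', hq⟩
    · exact Or.inr ⟨i, h', hk, hq⟩
  · rintro (⟨i, hj, hk, hq⟩ | ⟨i, hj, hk, hq⟩)
    · exact ⟨i, hj, by omega, hq⟩
    · exact ⟨i, by omega, hk, hq⟩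

lemma mem_top {q : List ℕ} (h : q ∈ Tset S []) : ∀ a, a <+: q → a ∈ S :=
  fun a ha => h.2.2 a (List.nil_prefix) ha

lemma top_tset_disjoint {π0 : List ℕ} (hπ0 : π0 ∉ S) {i : ℕ} :
    Disjoint (Tset S []) (Tset S (π0 ++ [i])) := by
  rw [Set.disjoint_left]
  intro q hq hq'
  exact hπ0 (mem_top hq π0 ((List.prefix_append π0 [i]).trans hq'.2.1))

lemma top_fo_disjoint {π0 : List ℕ} (hπ0 : π0 ∉ S) {j k : ℕ} :
    Disjoint (Tset S []) (Fo S π0 j k) := by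
  rw [Set.disjoint_left]
  rintro q hq ⟨i, _, _, hq'⟩
  exact (Set.disjoint_left.1 (top_tset_disjoint hπ0)) hq hq'

/-- membership of children of a node `z ∈ S` in `Dn S z` splits by first index. -/
lemma dn_eq_fo {t : OTree α} (hz : IsZone t S) {z : List ℕ} (hzS : z ∈ S) {K : ℕ}
    (hK : numChildren t z ≤ K) : Dn S z = Fo S z 0 K := by
  ext q
  constructor
  · rintro ⟨hq, hne⟩
    obtain ⟨c, r, rfl⟩ := exists_cons_of_proper_pre hq.2.1 (Ne.symm hne)
    have hpre : z ++ [c] <+: z ++ c :: r := ⟨r, by simp⟩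
    have hc : z ++ [c] ∈ S := hq.2.2 (z ++ [c]) (List.prefix_append z [c]) hpre
    have hcK : c < K := lt_of_lt_of_le (lt_numChildren_of_isNode (hz.1 _ hc)) hK
    refine ⟨c, Nat.zero_le c, hcK, hq.1, hpre, fun a h1 h2 => ?_⟩
    exact hq.2.2 a ((List.prefix_append z [c]).trans h1) h2
  · rintro ⟨i, _, _, hq⟩
    have hiS : z ++ [i] ∈ S := tset_base hq
    refine ⟨tset_trans hq (tset_child hzS hiS), fun hcon => ?_⟩
    have := hq.2.1
    rw [← hcon] at this
    have := this.length_le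
    simp at this
end ZoneAux

namespace ZoneAux
open OTree List

variable {α : Type} {t : OTree α} {S : Set (List ℕ)}

lemma interval_mem (hz : IsZone t S) {π : List ℕ} {i1 i2 i : ℕ}
    (h1 : π ++ [i1] ∈ S) (h2 : π ++ [i2] ∈ S) (hle1 : i1 ≤ i) (hle2 : i ≤ i2) :
    π ++ [i] ∈ S := by
  by_cases hπ : π ∈ S
  · rcases hz.2.1 π hπ with hall | hnone
    · have := lt_numChildren_of_isNode (hz.1 _ h2)
      exact hall i (by omega)
    · exact absurd h1 (hnone i1 (lt_numChildren_of_isNode (hz.1 _ h1)))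
  · have h4 := hz.2.2.2 (π ++ [i1]) h1 (π ++ [i2]) h2 (concat_ne_nil _ _) (concat_ne_nil _ _)
      (by rw [List.dropLast_concat]; exact hπ) (by rw [List.dropLast_concat]; exact hπ)
    have := h4.2 i (by rw [List.getLastD_concat]; exact hle1)
      (by rw [List.getLastD_concat]; exact hle2)
    rwa [List.dropLast_concat] at this

lemma zone_of_parts {P : Set (List ℕ)} {y : List ℕ} (hz : IsZone t S) (hPS : P ⊆ S)
    (hcl : ∀ q ∈ P, q ≠ y → ∀ c, q ++ [c] ∈ S → q ++ [c] ∈ P)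
    (hyc : y ∈ P → ∀ c, y ++ [c] ∉ P)
    (Hw : ((insert y (Conn t S)) ∩ P).Subsingleton)
    (hroots : ∀ p ∈ P, ∀ q ∈ P, p ≠ [] → q ≠ [] → p.dropLast ∉ P → q.dropLast ∉ P →
      p.dropLast = q.dropLast ∧
      ∀ i, p.getLastD 0 ≤ i → i ≤ q.getLastD 0 → p.dropLast ++ [i] ∈ P) :
    IsZone t P := by
  refine ⟨fun p hp => hz.1 p (hPS hp), ?_, ?_, hroots⟩
  · intro p hp
    by_cases hpy : p = y
    · subst hpy
      exact Or.inr (fun i _ => hyc hp i)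
    · rcases hz.2.1 p (hPS hp) with hall | hnone
      · exact Or.inl (fun i hi => hcl p hp hpy i (hall i hi))
      · exact Or.inr (fun i hi hc => hnone i hi (hPS hc))
  · refine Set.Subsingleton.anti Hw ?_
    rintro p ⟨hp, hnc, hnot⟩
    by_cases hpy : p = y
    · exact ⟨by simp [hpy], hp⟩
    · rcases hz.2.1 p (hPS hp) with hall | hnone
      · exact absurd (hcl p hp hpy 0 (hall 0 hnc)) (hnot 0 hnc)
      · exact ⟨Set.mem_insert_iff.2 (Or.inr ⟨hPS hp, hnc, hnone⟩), hp⟩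

lemma dn_concat_elim {π y : List ℕ} {i : ℕ} (h : π ++ [i] ∈ Dn S y) :
    y <+: π ∧ π ∈ S ∧ ∀ a, y <+: a → a <+: π → a ∈ S := by
  rcases List.prefix_concat_iff.1 h.1.2.1 with h' | h'
  · exact absurd (Set.mem_singleton_iff.2 h'.symm) h.2
  · exact ⟨h', h.1.2.2 π h' (List.prefix_append π [i]),
      fun a h1 h2 => h.1.2.2 a h1 (h2.trans (List.prefix_append π [i]))⟩

lemma concat_dn_of_concat_dn {π y : List ℕ} {i i1 : ℕ} (hcon : π ++ [i] ∈ Dn S y)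
    (hi1 : π ++ [i1] ∈ S) : π ++ [i1] ∈ Dn S y := by
  obtain ⟨hyπ, hπS, hchain⟩ := dn_concat_elim hcon
  refine ⟨⟨hi1, hyπ.trans (List.prefix_append π [i1]), fun a h1 h2 => ?_⟩, ?_⟩
  · rcases List.prefix_concat_iff.1 h2 with rfl | h3
    · exact hi1
    · exact hchain a h1 h3
  · intro he
    rw [Set.mem_singleton_iff] at he
    have hl := hyπ.length_le
    rw [← he] at hl
    simp only [List.length_append, List.length_cons, List.length_nil] at hl
    omega

theorem zgen (hz : IsZone t S) (T' : Set (List ℕ))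
    (hT' : T' = Tset S [] ∨ T' = (∅ : Set (List ℕ))) (π y : List ℕ) (j k : ℕ)
    (Hw : ((insert y (Conn t S)) ∩ ((T' ∪ Fo S π j k) \ Dn S y)).Subsingleton) :
    IsZone t ((T' ∪ Fo S π j k) \ Dn S y) := by
  have hT'sub : T' ⊆ Tset S [] := by
    rcases hT' with rfl | rfl
    · exact le_refl _
    · exact Set.empty_subset _
  set P := (T' ∪ Fo S π j k) \ Dn S y with hP
  have hPS : P ⊆ S := by
    intro q hq
    rcases hq.1 with h | h
    · exact (hT'sub h).1
    · exact fo_subset π j k h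
  have hcl : ∀ q ∈ P, q ≠ y → ∀ c, q ++ [c] ∈ S → q ++ [c] ∈ P := by
    intro q hq hqy c hc
    have hnd : q ++ [c] ∉ Dn S y := by
      intro hcon
      rcases dn_parent (hPS hq) hcon with rfl | h
      · exact hqy rfl
      · exact hq.2 h
    refine ⟨?_, hnd⟩
    rcases hq.1 with h | h
    · left
      have hq' := hT'sub h
      have : q ++ [c] ∈ Tset S [] := by
        refine ⟨hc, List.nil_prefix, fun a _ h2 => ?_⟩
        rcases List.prefix_concat_iff.1 h2 with rfl | h3
        · exact hc
        · exact mem_top hq' a h3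
      rcases hT' with rfl | rfl
      · exact this
      · exact absurd h (Set.notMem_empty q)
    · right
      obtain ⟨i, hj, hk, hqt⟩ := h
      refine ⟨i, hj, hk, hc, hqt.2.1.trans (List.prefix_append q [c]), fun a h1 h2 => ?_⟩
      rcases List.prefix_concat_iff.1 h2 with rfl | h3
      · exact hc
      · exact hqt.2.2 a h1 h3
  have hyc : y ∈ P → ∀ c, y ++ [c] ∉ P := by
    intro hy c hcP
    exact hcP.2 (dn_child (hPS hy) (hPS hcP))
  have hroot : ∀ p ∈ P, p ≠ [] → p.dropLast ∉ P → ∃ i, j ≤ i ∧ i < k ∧ p = π ++ [i] := by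
    intro p hp hpne hpd
    have hnd : p.dropLast ∈ Dn S y → False := fun h => hp.2 (dn_dropLast (hPS hp) hpne h)
    rcases hp.1 with h | h
    · exfalso
      have hq' := hT'sub h
      apply hpd
      have hdT : p.dropLast ∈ Tset S [] :=
        ⟨mem_top hq' _ (List.dropLast_prefix p), List.nil_prefix,
          fun a _ h2 => mem_top hq' a (h2.trans (List.dropLast_prefix p))⟩
      have hT'' : p.dropLast ∈ T' := by
        rcases hT' with rfl | rfl
        · exact hdT
        · exact absurd h (Set.notMem_empty p)
      exact ⟨Or.inl hT'', fun hc => hnd hc⟩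
    · obtain ⟨i, hj, hk, hqt⟩ := h
      by_cases hpe : p = π ++ [i]
      · exact ⟨i, hj, hk, hpe⟩
      · exfalso
        apply hpd
        have hlen : (π ++ [i]).length < p.length := by
          rcases Nat.lt_or_ge (π ++ [i]).length p.length with h' | h'
          · exact h'
          · exact absurd (hqt.2.1.eq_of_length (le_antisymm hqt.2.1.length_le h')) (Ne.symm hpe)
        have hpre : π ++ [i] <+: p.dropLast :=
          pre_of_le hqt.2.1 (List.dropLast_prefix p) (by rw [List.length_dropLast]; omega)
        have hdMem : p.dropLast ∈ Tset S (π ++ [i]) :=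
          ⟨hqt.2.2 _ hpre (List.dropLast_prefix p), hpre,
            fun a h1 h2 => hqt.2.2 a h1 (h2.trans (List.dropLast_prefix p))⟩
        exact ⟨Or.inr ⟨i, hj, hk, hdMem⟩, fun hc => hnd hc⟩
  refine zone_of_parts hz hPS hcl hyc Hw ?_
  intro p hp q hq hpne hqne hpd hqd
  obtain ⟨i1, hj1, hk1, rfl⟩ := hroot p hp hpne hpd
  obtain ⟨i2, hj2, hk2, rfl⟩ := hroot q hq hqne hqd
  rw [List.dropLast_concat]
  refine ⟨by rw [List.dropLast_concat], fun i h1 h2 => ?_⟩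
  rw [List.getLastD_concat] at h1 h2
  have hiS : π ++ [i] ∈ S := interval_mem hz (hPS hp) (hPS hq) h1 h2
  have hnotdn : π ++ [i] ∉ Dn S y := fun hcon =>
    hp.2 (concat_dn_of_concat_dn hcon (hPS hp))
  exact ⟨Or.inr ⟨i, le_trans hj1 h1, lt_of_le_of_lt h2 hk2, mem_tset_self hiS⟩, hnotdn⟩

theorem zup (hz : IsZone t S) (y : List ℕ)
    (Hw : ((insert y (Conn t S)) ∩ (S \ Dn S y)).Subsingleton) :
    IsZone t (S \ Dn S y) := by
  have hPS : (S \ Dn S y) ⊆ S := Set.diff_subset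
  have hcl : ∀ q ∈ S \ Dn S y, q ≠ y → ∀ c, q ++ [c] ∈ S → q ++ [c] ∈ S \ Dn S y := by
    intro q hq hqy c hc
    refine ⟨hc, fun hcon => ?_⟩
    rcases dn_parent hq.1 hcon with rfl | h
    · exact hqy rfl
    · exact hq.2 h
  have hyc : y ∈ S \ Dn S y → ∀ c, y ++ [c] ∉ S \ Dn S y :=
    fun hy c hcP => hcP.2 (dn_child hy.1 hcP.1)
  refine zone_of_parts hz hPS hcl hyc Hw ?_
  intro p hp q hq hpne hqne hpd hqd
  have hpdS : p.dropLast ∉ S := by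
    intro hc
    exact hpd ⟨hc, fun hdn => hp.2 (dn_dropLast hp.1 hpne hdn)⟩
  have hqdS : q.dropLast ∉ S := by
    intro hc
    exact hqd ⟨hc, fun hdn => hq.2 (dn_dropLast hq.1 hqne hdn)⟩
  have h4 := hz.2.2.2 p hp.1 q hq.1 hpne hqne hpdS hqdS
  refine ⟨h4.1, fun i h1 h2 => ?_⟩
  refine ⟨h4.2 i h1 h2, fun hcon => ?_⟩
  exact hpdS (dn_concat_elim hcon).2.1

end ZoneAux

namespace ZoneAux
open OTree List

open scoped Classical

variable {α : Type} {t : OTree α} {S : Set (List ℕ)}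

/-! ### Counting -/

lemma tset_finite (hfin : S.Finite) (x : List ℕ) : (Tset S x).Finite :=
  hfin.subset (tset_subset x)

lemma dn_finite (hfin : S.Finite) (x : List ℕ) : (Dn S x).Finite :=
  hfin.subset (dn_subset x)

lemma fo_finite (hfin : S.Finite) (π : List ℕ) (j k : ℕ) : (Fo S π j k).Finite :=
  hfin.subset (fo_subset π j k)

lemma fo_single (π : List ℕ) (l : ℕ) : Fo S π l (l + 1) = Tset S (π ++ [l]) := by
  ext q
  constructor
  · rintro ⟨i, h1, h2, h⟩
    have : i = l := by omega
    exact this ▸ h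
  · intro h
    exact ⟨l, le_refl l, by omega, h⟩

lemma fo_ncard (hfin : S.Finite) (π : List ℕ) (j : ℕ) :
    ∀ n, (Fo S π j (j + n)).ncard = ∑ x ∈ Finset.range n, sig S (π ++ [j + x]) := by
  intro n
  induction n with
  | zero =>
    have h0 : Fo S π j j = ∅ := by
      ext q
      simp only [Set.mem_empty_iff_false, iff_false]
      rintro ⟨i, h1, h2, _⟩
      omega
    simp [h0]
  | succ n ih =>
    have hsplit : Fo S π j (j + (n + 1)) = Fo S π j (j + n) ∪ Tset S (π ++ [j + n]) := by
      rw [← fo_single (S := S) π (j + n)]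
      have : j + (n + 1) = (j + n) + 1 := by omega
      rw [this]
      exact fo_split (by omega) (by omega)
    have hdisj : Disjoint (Fo S π j (j + n)) (Tset S (π ++ [j + n])) :=
      Disjoint.mono_right (le_of_eq (fo_single (S := S) π (j + n)).symm)
        (fo_disjoint (le_refl (j + n)))
    rw [hsplit, Set.ncard_union_eq hdisj (fo_finite hfin _ _ _) (tset_finite hfin _),
      Finset.sum_range_succ, ih]
    rfl

lemma fo_single' {π : List ℕ} {l k : ℕ} (h : k = l + 1) :
    Fo S π l k = Tset S (π ++ [l]) := by
  subst h; exact fo_single π l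

lemma fo_sub_dn {z : List ℕ} (hzS : z ∈ S) (j k : ℕ) : Fo S z j k ⊆ Dn S z := by
  rintro q ⟨i, _, _, hq⟩
  refine ⟨tset_trans hq (tset_child hzS (tset_base hq)), fun hc => ?_⟩
  rw [Set.mem_singleton_iff] at hc
  subst hc
  have := hq.2.1.length_le
  simp at this

lemma sig_eq (hfin : S.Finite) {z : List ℕ} (hzS : z ∈ S) :
    sig S z = 1 + (Dn S z).ncard := by
  have : Tset S z = insert z (Dn S z) := by
    ext q
    constructor
    · intro h
      by_cases hq : q = z
      · simp [hq]
      · exact Set.mem_insert_iff.2 (Or.inr ⟨h, hq⟩)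
    · intro h
      rcases Set.mem_insert_iff.1 h with rfl | h
      · exact mem_tset_self hzS
      · exact h.1
  rw [sig, this, Set.ncard_insert_of_notMem (fun h => h.2 rfl) (dn_finite hfin z)]
  omega

lemma mem_of_sig_pos {z : List ℕ} (h : 0 < sig S z) : z ∈ S := by
  have h2 : (Tset S z).ncard ≠ 0 := by
    have : sig S z ≠ 0 := by omega
    simpa [sig] using this
  obtain ⟨q, hq⟩ := Set.nonempty_of_ncard_ne_zero h2
  exact tset_base hq

lemma sig_pos (hfin : S.Finite) {z : List ℕ} (hzS : z ∈ S) : 0 < sig S z := by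
  show 0 < (Tset S z).ncard
  exact (Set.ncard_pos (tset_finite hfin z)).2 ⟨z, mem_tset_self hzS⟩

/-! ### Roots and decomposition -/

def Rt (S : Set (List ℕ)) : Set (List ℕ) := {p | p ∈ S ∧ p ≠ [] ∧ p.dropLast ∉ S}

lemma decomp_aux : ∀ n (q : List ℕ), q.length ≤ n → q ∈ S →
    (q ∈ Tset S [] ∨ ∃ r ∈ Rt S, q ∈ Tset S r) := by
  intro n
  induction n with
  | zero =>
    intro q hq hqS
    have : q = [] := by
      cases q with
      | nil => rfl
      | cons a l => simp at hq
    subst this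
    exact Or.inl (mem_tset_self hqS)
  | succ n ih =>
    intro q hq hqS
    by_cases hqe : q = []
    · subst hqe
      exact Or.inl (mem_tset_self hqS)
    · have hlpos : 0 < q.length := List.length_pos_iff.2 hqe
      by_cases hd : q.dropLast ∈ S
      · have hlen : q.dropLast.length ≤ n := by
          rw [List.length_dropLast]; omega
        have hstep : ∀ a, a <+: q → a = q ∨ a <+: q.dropLast := by
          intro a h2
          rcases Nat.lt_or_ge a.length q.length with h' | h'
          · exact Or.inr (pre_of_le h2 (List.dropLast_prefix q)
              (by rw [List.length_dropLast]; omega))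
          · exact Or.inl (h2.eq_of_length (le_antisymm h2.length_le h'))
        rcases ih q.dropLast hlen hd with h | ⟨r, hr, h⟩
        · left
          refine ⟨hqS, List.nil_prefix, fun a _ h2 => ?_⟩
          rcases hstep a h2 with rfl | h3
          · exact hqS
          · exact mem_top h a h3
        · right
          refine ⟨r, hr, hqS, h.2.1.trans (List.dropLast_prefix q), fun a h1 h2 => ?_⟩
          rcases hstep a h2 with rfl | h3
          · exact hqS
          · exact h.2.2 a h1 h3
      · exact Or.inr ⟨q, ⟨hqS, hqe, hd⟩, mem_tset_self hqS⟩

lemma decomp {q : List ℕ} (hqS : q ∈ S) :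
    q ∈ Tset S [] ∨ ∃ r ∈ Rt S, q ∈ Tset S r :=
  decomp_aux q.length q (le_refl _) hqS

lemma rt_dropLast_eq (hz : IsZone t S) {p r : List ℕ} (hp : p ∈ Rt S) (hr : r ∈ Rt S) :
    p.dropLast = r.dropLast :=
  (hz.2.2.2 p hp.1 r hr.1 hp.2.1 hr.2.1 hp.2.2 hr.2.2).1

lemma rt_eq_concat {p : List ℕ} (hp : p ∈ Rt S) : p = p.dropLast ++ [p.getLastD 0] := by
  rcases List.eq_nil_or_concat p with rfl | ⟨l, a, rfl⟩
  · exact absurd rfl hp.2.1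
  · rw [List.concat_eq_append, List.dropLast_concat, List.getLastD_concat]

lemma rt_interval (hz : IsZone t S) {p r : List ℕ} (hp : p ∈ Rt S) (hr : r ∈ Rt S)
    {i : ℕ} (h1 : p.getLastD 0 ≤ i) (h2 : i ≤ r.getLastD 0) : p.dropLast ++ [i] ∈ Rt S := by
  have h4 := hz.2.2.2 p hp.1 r hr.1 hp.2.1 hr.2.1 hp.2.2 hr.2.2
  refine ⟨h4.2 i h1 h2, concat_ne_nil _ _, ?_⟩
  rw [List.dropLast_concat]
  exact hp.2.2

/-! ### The greedy descent -/

lemma greedy (hz : IsZone t S) (hfin : S.Finite) {m : ℕ} (hm : 2 ≤ m) :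
    ∀ n z, z ∈ S → sig S z ≤ n → m + 2 ≤ 2 * sig S z →
    ∃ z' k, z' ∈ S ∧ m ≤ 2 * (Fo S z' 0 k).ncard ∧ (Fo S z' 0 k).ncard ≤ m := by
  intro n
  induction n with
  | zero =>
    intro z hzS hle hbig
    omega
  | succ n ih =>
    intro z hzS hle hbig
    have hDn : Dn S z = Fo S z 0 (numChildren t z) := dn_eq_fo hz hzS (le_refl _)
    have hsig : sig S z = 1 + (Dn S z).ncard := sig_eq hfin hzS
    have hex : ∃ j, m ≤ 2 * (Fo S z 0 j).ncard := by
      refine ⟨numChildren t z, ?_⟩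
      rw [← hDn]
      omega
    set k' := Nat.find hex with hk'
    have hspec : m ≤ 2 * (Fo S z 0 k').ncard := Nat.find_spec hex
    have hk'pos : k' ≠ 0 := by
      intro h0
      rw [h0] at hspec
      have : Fo S z 0 0 = ∅ := by
        ext q
        simp only [Set.mem_empty_iff_false, iff_false]
        rintro ⟨i, _, h2, _⟩
        omega
      rw [this] at hspec
      simp at hspec
      omega
    have hmin : ¬ m ≤ 2 * (Fo S z 0 (k' - 1)).ncard := Nat.find_min hex (by omega)
    by_cases hcase : (Fo S z 0 k').ncard ≤ m
    · exact ⟨z, k', hzS, hspec, hcase⟩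
    · set c := z ++ [k' - 1] with hc
      have hsplit : (Fo S z 0 k').ncard = (Fo S z 0 (k' - 1)).ncard + sig S c := by
        have h1 : Fo S z 0 k' = Fo S z 0 (k' - 1) ∪ Fo S z (k' - 1) k' := fo_split (by omega) (by omega)
        have h2 : Fo S z (k' - 1) k' = Tset S c := fo_single' (by omega)
        rw [h1, h2, Set.ncard_union_eq (Disjoint.mono_right (le_of_eq h2.symm)
          (fo_disjoint (le_refl (k' - 1)))) (fo_finite hfin _ _ _) (tset_finite hfin _)]
        rfl
      have hc2 : m + 3 ≤ 2 * sig S c := by omega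
      have hcS : c ∈ S := mem_of_sig_pos (by omega)
      have hmono : (Fo S z 0 k').ncard ≤ (Dn S z).ncard :=
        Set.ncard_le_ncard (fo_sub_dn hzS 0 k') (dn_finite hfin z)
      have hcn : sig S c ≤ n := by omega
      exact ih c hcS hcn (by omega)

end ZoneAux

namespace ZoneAux
open OTree List

open scoped Classical

variable {α : Type} {t : OTree α} {S : Set (List ℕ)}

lemma conn_sub (hz : IsZone t S) : (Conn t S).Subsingleton := hz.2.2.1

lemma conn_mem_S {w : List ℕ} (h : w ∈ Conn t S) : w ∈ S := h.1

lemma hw_plain {y : List ℕ} (hz : IsZone t S) (hyS : y ∉ S) {P : Set (List ℕ)} (hPS : P ⊆ S) :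
    ((insert y (Conn t S)) ∩ P).Subsingleton := by
  intro a ha b hb
  have hmem : ∀ x ∈ (insert y (Conn t S)) ∩ P, x ∈ Conn t S := by
    rintro x ⟨hx1, hx2⟩
    rcases Set.mem_insert_iff.1 hx1 with rfl | h
    · exact absurd (hPS hx2) hyS
    · exact h
  exact conn_sub hz (hmem a ha) (hmem b hb)

lemma hw_hole {y : List ℕ} {P : Set (List ℕ)}
    (h : ∀ x ∈ Conn t S, x ∈ P → x = y) : ((insert y (Conn t S)) ∩ P).Subsingleton := by
  intro a ha b hb
  have hmem : ∀ x ∈ (insert y (Conn t S)) ∩ P, x = y := by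
    rintro x ⟨hx1, hx2⟩
    rcases Set.mem_insert_iff.1 hx1 with rfl | hx
    · rfl
    · exact h x hx hx2
  rw [hmem a ha, hmem b hb]

lemma zone_empty : IsZone t (∅ : Set (List ℕ)) := by
  refine ⟨fun p hp => absurd hp (Set.notMem_empty p), fun p hp => absurd hp (Set.notMem_empty p),
    fun a ha => absurd ha.1 (Set.notMem_empty a), fun p hp => absurd hp (Set.notMem_empty p)⟩

lemma exists_not_mem (hfin : S.Finite) : ∃ y : List ℕ, y ∉ S := by
  obtain ⟨y, hy⟩ := hfin.infinite_compl.nonempty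
  exact ⟨y, hy⟩

lemma dn_of_notMem {y : List ℕ} (hyS : y ∉ S) : Dn S y = ∅ := by
  ext q
  simp only [Set.mem_empty_iff_false, iff_false]
  intro h
  exact hyS (tset_base h.1)

lemma fo_empty {π : List ℕ} {j k : ℕ} (h : k ≤ j) : Fo S π j k = (∅ : Set (List ℕ)) := by
  ext q
  simp only [Set.mem_empty_iff_false, iff_false]
  rintro ⟨i, h1, h2, _⟩
  omega

/-- no-hole, no-top forest zone -/
lemma zone_fo (hz : IsZone t S) (hfin : S.Finite) (π : List ℕ) (j k : ℕ) :
    IsZone t (Fo S π j k) := by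
  obtain ⟨y₀, hy₀⟩ := exists_not_mem hfin
  have h := zgen hz ∅ (Or.inr rfl) π y₀ j k
    (hw_plain hz hy₀ (fun q hq => by
      rcases hq.1 with h | h
      · exact absurd h (Set.notMem_empty q)
      · exact fo_subset π j k h))
  have he : ((∅ ∪ Fo S π j k) \ Dn S y₀) = Fo S π j k := by
    rw [dn_of_notMem hy₀, Set.empty_union, Set.diff_empty]
  rwa [he] at h

/-- no-hole forest zone with top part -/
lemma zone_top_fo (hz : IsZone t S) (hfin : S.Finite) (π : List ℕ) (j k : ℕ) :
    IsZone t (Tset S [] ∪ Fo S π j k) := by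
  obtain ⟨y₀, hy₀⟩ := exists_not_mem hfin
  have h := zgen hz (Tset S []) (Or.inl rfl) π y₀ j k
    (hw_plain hz hy₀ (fun q hq => by
      rcases hq.1 with h | h
      · exact (tset_subset []) h
      · exact fo_subset π j k h))
  have he : ((Tset S [] ∪ Fo S π j k) \ Dn S y₀) = Tset S [] ∪ Fo S π j k := by
    rw [dn_of_notMem hy₀, Set.diff_empty]
  rwa [he] at h

lemma zone_top (hz : IsZone t S) (hfin : S.Finite) : IsZone t (Tset S []) := by
  have h := zone_top_fo hz hfin [] 0 0
  rwa [fo_empty (le_refl 0), Set.union_empty] at h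

/-- forest zone with hole at `y` -/
lemma zone_fo_hole (hz : IsZone t S) (π y : List ℕ) (j k : ℕ)
    (hw : ∀ x ∈ Conn t S, x ∈ Fo S π j k \ Dn S y → x = y) :
    IsZone t (Fo S π j k \ Dn S y) := by
  have h := zgen hz ∅ (Or.inr rfl) π y j k
    (hw_hole (fun x hx hx2 => hw x hx (by rwa [Set.empty_union] at hx2)))
  rwa [Set.empty_union] at h

/-- top-with-forest zone with hole at `y` -/
lemma zone_top_fo_hole (hz : IsZone t S) (π y : List ℕ) (j k : ℕ)
    (hw : ∀ x ∈ Conn t S, x ∈ (Tset S [] ∪ Fo S π j k) \ Dn S y → x = y) :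
    IsZone t ((Tset S [] ∪ Fo S π j k) \ Dn S y) :=
  zgen hz (Tset S []) (Or.inl rfl) π y j k (hw_hole hw)

lemma zone_up (hz : IsZone t S) (y : List ℕ)
    (hw : ∀ x ∈ Conn t S, x ∈ S \ Dn S y → x = y) : IsZone t (S \ Dn S y) :=
  zup hz y (hw_hole hw)

/-- final assembly of five zones -/
lemma assemble5 {m : ℕ} (Z1 Z2 Z3 Z4 Z5 : Set (List ℕ))
    (hz1 : IsZone t Z1) (hz2 : IsZone t Z2) (hz3 : IsZone t Z3)
    (hz4 : IsZone t Z4) (hz5 : IsZone t Z5)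
    (d12 : Disjoint Z1 Z2) (d13 : Disjoint Z1 Z3) (d14 : Disjoint Z1 Z4) (d15 : Disjoint Z1 Z5)
    (d23 : Disjoint Z2 Z3) (d24 : Disjoint Z2 Z4) (d25 : Disjoint Z2 Z5)
    (d34 : Disjoint Z3 Z4) (d35 : Disjoint Z3 Z5) (d45 : Disjoint Z4 Z5)
    (hun : Z1 ∪ Z2 ∪ Z3 ∪ Z4 ∪ Z5 = S)
    (hA1 : m ≤ 2 * Z1.ncard) (hA2 : Z1.ncard ≤ m) :
    ∃ Z : Finset (Set (List ℕ)), IsZonePartition t S Z ∧ Z.card ≤ 5 ∧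
      ∃ A ∈ Z, m ≤ 2 * A.ncard ∧ A.ncard ≤ m := by
  refine ⟨{Z1, Z2, Z3, Z4, Z5}, ⟨?_, ?_, ?_⟩, ?_, ⟨Z1, by simp, hA1, hA2⟩⟩
  · intro A hA
    simp only [Finset.mem_insert, Finset.mem_singleton] at hA
    rcases hA with rfl | rfl | rfl | rfl | rfl <;> assumption
  · intro x hx y hy hxy
    simp only [Finset.coe_insert, Set.mem_insert_iff, Finset.coe_singleton,
      Set.mem_singleton_iff] at hx hy
    simp only [Function.onFun, id]
    rcases hx with rfl | rfl | rfl | rfl | rfl <;> rcases hy with rfl | rfl | rfl | rfl | rfl <;>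
      first
      | exact absurd rfl hxy
      | exact d12 | exact d13 | exact d14 | exact d15
      | exact d23 | exact d24 | exact d25
      | exact d34 | exact d35 | exact d45
      | exact d12.symm | exact d13.symm | exact d14.symm | exact d15.symm
      | exact d23.symm | exact d24.symm | exact d25.symm
      | exact d34.symm | exact d35.symm | exact d45.symm
  · have he : ⋃₀ (↑({Z1, Z2, Z3, Z4, Z5} : Finset (Set (List ℕ))) : Set (Set (List ℕ)))
        = Z1 ∪ Z2 ∪ Z3 ∪ Z4 ∪ Z5 := by
      simp [Set.sUnion_insert, Set.union_assoc]
    rw [he, hun]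
  · refine le_trans (Finset.card_insert_le _ _) (Nat.succ_le_succ ?_)
    refine le_trans (Finset.card_insert_le _ _) (Nat.succ_le_succ ?_)
    refine le_trans (Finset.card_insert_le _ _) (Nat.succ_le_succ ?_)
    refine le_trans (Finset.card_insert_le _ _) (Nat.succ_le_succ ?_)
    exact Finset.card_le_one.2 (by simp)

/-- root interval setup -/
lemma root_setup (hz : IsZone t S) (hfin : S.Finite) {r₀ : List ℕ} (hr₀ : r₀ ∈ Rt S) :
    ∃ π0 a b, π0 ∉ S ∧ a ≤ b ∧
      (∀ r ∈ Rt S, r = π0 ++ [r.getLastD 0] ∧ a ≤ r.getLastD 0 ∧ r.getLastD 0 ≤ b) ∧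
      (∀ i, a ≤ i → i ≤ b → π0 ++ [i] ∈ Rt S) ∧
      (∀ q ∈ S, q ∈ Tset S [] ∨ ∃ i, a ≤ i ∧ i ≤ b ∧ q ∈ Tset S (π0 ++ [i])) := by
  have hRtfin : (Rt S).Finite := hfin.subset (fun p hp => hp.1)
  set J : Finset ℕ := hRtfin.toFinset.image (fun p => p.getLastD 0) with hJ
  have hJmem : ∀ r ∈ Rt S, r.getLastD 0 ∈ J := by
    intro r hr
    rw [hJ]
    exact Finset.mem_image.2 ⟨r, hRtfin.mem_toFinset.2 hr, rfl⟩
  have hJne : J.Nonempty := ⟨r₀.getLastD 0, hJmem r₀ hr₀⟩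
  set a := J.min' hJne with ha
  set b := J.max' hJne with hb
  have hJelt : ∀ i ∈ J, ∃ r ∈ Rt S, r.getLastD 0 = i := by
    intro i hi
    rw [hJ] at hi
    obtain ⟨r, hr, hri⟩ := Finset.mem_image.1 hi
    exact ⟨r, hRtfin.mem_toFinset.1 hr, hri⟩
  set π0 := r₀.dropLast with hπ0
  have hform : ∀ r ∈ Rt S, r = π0 ++ [r.getLastD 0] := by
    intro r hr
    have h1 := rt_eq_concat hr
    rw [rt_dropLast_eq hz hr hr₀] at h1
    exact h1
  obtain ⟨ra, hraRt, hraval⟩ := hJelt a (J.min'_mem hJne)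
  obtain ⟨rb, hrbRt, hrbval⟩ := hJelt b (J.max'_mem hJne)
  refine ⟨π0, a, b, hr₀.2.2, J.min'_le _ (J.max'_mem hJne), ?_, ?_, ?_⟩
  · intro r hr
    exact ⟨hform r hr, J.min'_le _ (hJmem r hr), J.le_max' _ (hJmem r hr)⟩
  · intro i h1 h2
    have := rt_interval hz hraRt hrbRt (i := i) (by rwa [hraval]) (by rwa [hrbval])
    have hd : ra.dropLast = π0 := rt_dropLast_eq hz hraRt hr₀
    rwa [hd] at this
  · intro q hq
    rcases decomp hq with h | ⟨r, hr, hqr⟩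
    · exact Or.inl h
    · refine Or.inr ⟨r.getLastD 0, (J.min'_le _ (hJmem r hr)), (J.le_max' _ (hJmem r hr)), ?_⟩
      rwa [← hform r hr]

end ZoneAux

namespace ZoneAux
open OTree List

open scoped Classical

variable {α : Type} {t : OTree α} {S : Set (List ℕ)}

def Goal (t : OTree α) (S : Set (List ℕ)) (m : ℕ) : Prop :=
  ∃ Z : Finset (Set (List ℕ)), IsZonePartition t S Z ∧ Z.card ≤ 5 ∧
    ∃ A ∈ Z, m ≤ 2 * A.ncard ∧ A.ncard ≤ m

lemma disj_empty (X : Set (List ℕ)) : Disjoint X (∅ : Set (List ℕ)) := disjoint_bot_right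

lemma disj_empty' (X : Set (List ℕ)) : Disjoint (∅ : Set (List ℕ)) X := disjoint_bot_left

lemma upper_sep (hz : IsZone t S) (hfin : S.Finite) {m : ℕ}
    {z : List ℕ} {k : ℕ} (hzS : z ∈ S)
    (hA1 : m ≤ 2 * (Fo S z 0 k).ncard) (hA2 : (Fo S z 0 k).ncard ≤ m)
    {w : List ℕ} (hwC : w ∈ Conn t S)
    (T3 T4 : Set (List ℕ)) (hT3 : T3 = Tset S [] ∨ T3 = ∅) (hT4 : T4 = Tset S [] ∨ T4 = ∅)
    (π3 π4 : List ℕ) {j1 k1 j2 k2 : ℕ}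
    (hDn3 : Dn S z ⊆ T3 ∪ Fo S π3 j1 k1)
    (hcov : ∀ q ∈ S, q ∈ T3 ∪ Fo S π3 j1 k1 ∨ q ∈ T4 ∪ Fo S π4 j2 k2)
    (hsub4 : T4 ∪ Fo S π4 j2 k2 ⊆ S)
    (hd34 : Disjoint (T3 ∪ Fo S π3 j1 k1) (T4 ∪ Fo S π4 j2 k2))
    (hw3 : w ∉ T3 ∪ Fo S π3 j1 k1) :
    Goal t S m := by
  have hDnAR : Dn S z = Fo S z 0 k ∪ Fo S z k (numChildren t z + k) := by
    rw [dn_eq_fo hz hzS (show numChildren t z ≤ numChildren t z + k by omega),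
      ← fo_split (Nat.zero_le k) (by omega)]
  have hsub3 : T3 ∪ Fo S π3 j1 k1 ⊆ S := by
    rintro q (h | h)
    · rcases hT3 with rfl | rfl
      · exact (tset_subset []) h
      · exact absurd h (Set.notMem_empty q)
    · exact fo_subset _ _ _ h
  have hzA : IsZone t (Fo S z 0 k) := zone_fo hz hfin z 0 k
  have hzR : IsZone t (Fo S z k (numChildren t z + k)) := zone_fo hz hfin z k _
  have hzZ3 : IsZone t ((T3 ∪ Fo S π3 j1 k1) \ Dn S z) := by
    refine zgen hz T3 hT3 π3 z j1 k1 (hw_hole ?_)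
    intro x hx hxm
    exfalso
    have hxw : x = w := conn_sub hz hx hwC
    subst hxw
    exact hw3 hxm.1
  have hzZ4 : IsZone t (T4 ∪ Fo S π4 j2 k2) := by
    obtain ⟨y₀, hy₀⟩ := exists_not_mem hfin
    have h := zgen hz T4 hT4 π4 y₀ j2 k2 (hw_plain hz hy₀ (fun q hq => hsub4 hq.1))
    rwa [dn_of_notMem hy₀, Set.diff_empty] at h
  have hARDn : Fo S z 0 k ∪ Fo S z k (numChildren t z + k) ⊆ Dn S z := le_of_eq hDnAR.symm
  have dDn3 : Disjoint (Dn S z) ((T3 ∪ Fo S π3 j1 k1) \ Dn S z) := Set.disjoint_sdiff_right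
  refine assemble5 (Fo S z 0 k) (Fo S z k (numChildren t z + k))
    ((T3 ∪ Fo S π3 j1 k1) \ Dn S z) (T4 ∪ Fo S π4 j2 k2) ∅
    hzA hzR hzZ3 hzZ4 zone_empty
    (fo_disjoint (le_refl k))
    (dDn3.mono_left (fun q hq => hARDn (Or.inl hq)))
    (hd34.mono_left (fun q hq => hDn3 (hARDn (Or.inl hq))))
    (disj_empty _)
    (dDn3.mono_left (fun q hq => hARDn (Or.inr hq)))
    (hd34.mono_left (fun q hq => hDn3 (hARDn (Or.inr hq))))
    (disj_empty _)
    (hd34.mono_left Set.diff_subset)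
    (disj_empty _) (disj_empty _)
    ?_ hA1 hA2
  rw [Set.union_empty]
  apply Set.Subset.antisymm
  · rintro q (((hq | hq) | hq) | hq)
    · exact fo_subset _ _ _ hq
    · exact fo_subset _ _ _ hq
    · exact hsub3 hq.1
    · exact hsub4 hq
  · intro q hq
    rcases hcov q hq with h | h
    · by_cases hdz : q ∈ Dn S z
      · rw [hDnAR] at hdz
        rcases hdz with h' | h'
        · exact Or.inl (Or.inl (Or.inl h'))
        · exact Or.inl (Or.inl (Or.inr h'))
      · exact Or.inl (Or.inr ⟨h, hdz⟩)
    · exact Or.inr h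

lemma upper_split (hz : IsZone t S) (hfin : S.Finite) {m : ℕ}
    {z : List ℕ} {k : ℕ} (hzS : z ∈ S)
    (hA1 : m ≤ 2 * (Fo S z 0 k).ncard) (hA2 : (Fo S z 0 k).ncard ≤ m)
    {w : List ℕ} (hwC : w ∈ Conn t S)
    {c : List ℕ} {aa : ℕ} (hcS : c ∈ S) (hz' : z ∈ Tset S (c ++ [aa]))
    (hwDnc : w ∈ Dn S c)
    {j1 k1 j2 k2 : ℕ} (hj1 : j1 ≤ aa) (hk1 : aa < k1)
    (hw3 : w ∉ Fo S c j1 k1)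
    (hcov : ∀ i, i < numChildren t c → (j1 ≤ i ∧ i < k1) ∨ (j2 ≤ i ∧ i < k2))
    (hd34 : Disjoint (Fo S c j1 k1) (Fo S c j2 k2)) :
    Goal t S m := by
  have hDnAR : Dn S z = Fo S z 0 k ∪ Fo S z k (numChildren t z + k) := by
    rw [dn_eq_fo hz hzS (show numChildren t z ≤ numChildren t z + k by omega),
      ← fo_split (Nat.zero_le k) (by omega)]
  have hDnc : Dn S c = Fo S c 0 (numChildren t c) := dn_eq_fo hz hcS (le_refl _)
  have hDnz3 : Dn S z ⊆ Fo S c j1 k1 := fun q hq => tset_sub_fo hj1 hk1 (dn_sub_tset hz' hq)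
  have hzA : IsZone t (Fo S z 0 k) := zone_fo hz hfin z 0 k
  have hzR : IsZone t (Fo S z k (numChildren t z + k)) := zone_fo hz hfin z k _
  have hzZ3 : IsZone t (Fo S c j1 k1 \ Dn S z) := by
    refine zone_fo_hole hz c z j1 k1 ?_
    intro x hx hxm
    exfalso
    have hxw : x = w := conn_sub hz hx hwC
    subst hxw
    exact hw3 hxm.1
  have hzZ4 : IsZone t (Fo S c j2 k2) := zone_fo hz hfin c j2 k2
  have hzZ5 : IsZone t (S \ Dn S c) := by
    refine zone_up hz c ?_
    intro x hx hxm
    exfalso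
    have hxw : x = w := conn_sub hz hx hwC
    subst hxw
    exact hxm.2 hwDnc
  have hARDn : Fo S z 0 k ∪ Fo S z k (numChildren t z + k) ⊆ Dn S z := le_of_eq hDnAR.symm
  have h3Dnc : Fo S c j1 k1 ⊆ Dn S c := fo_sub_dn hcS j1 k1
  have h4Dnc : Fo S c j2 k2 ⊆ Dn S c := fo_sub_dn hcS j2 k2
  have dDn3 : Disjoint (Dn S z) (Fo S c j1 k1 \ Dn S z) := Set.disjoint_sdiff_right
  have dDnc5 : Disjoint (Dn S c) (S \ Dn S c) := Set.disjoint_sdiff_right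
  refine assemble5 (Fo S z 0 k) (Fo S z k (numChildren t z + k))
    (Fo S c j1 k1 \ Dn S z) (Fo S c j2 k2) (S \ Dn S c)
    hzA hzR hzZ3 hzZ4 hzZ5
    (fo_disjoint (le_refl k))
    (dDn3.mono_left (fun q hq => hARDn (Or.inl hq)))
    (hd34.mono_left (fun q hq => hDnz3 (hARDn (Or.inl hq))))
    (dDnc5.mono_left (fun q hq => h3Dnc (hDnz3 (hARDn (Or.inl hq)))))
    (dDn3.mono_left (fun q hq => hARDn (Or.inr hq)))
    (hd34.mono_left (fun q hq => hDnz3 (hARDn (Or.inr hq))))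
    (dDnc5.mono_left (fun q hq => h3Dnc (hDnz3 (hARDn (Or.inr hq)))))
    (hd34.mono_left Set.diff_subset)
    (dDnc5.mono_left (fun q hq => h3Dnc hq.1))
    (dDnc5.mono_left h4Dnc)
    ?_ hA1 hA2
  apply Set.Subset.antisymm
  · rintro q ((((hq | hq) | hq) | hq) | hq)
    · exact fo_subset _ _ _ hq
    · exact fo_subset _ _ _ hq
    · exact fo_subset _ _ _ hq.1
    · exact fo_subset _ _ _ hq
    · exact hq.1
  · intro q hq
    by_cases hdc : q ∈ Dn S c
    · rw [hDnc] at hdc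
      obtain ⟨i, _, hiK, hqt⟩ := hdc
      rcases hcov i hiK with ⟨h1, h2⟩ | ⟨h1, h2⟩
      · by_cases hdz : q ∈ Dn S z
        · rw [hDnAR] at hdz
          rcases hdz with h' | h'
          · exact Or.inl (Or.inl (Or.inl (Or.inl h')))
          · exact Or.inl (Or.inl (Or.inl (Or.inr h')))
        · exact Or.inl (Or.inl (Or.inr ⟨⟨i, h1, h2, hqt⟩, hdz⟩))
      · exact Or.inl (Or.inr ⟨i, h1, h2, hqt⟩)
    · exact Or.inr ⟨hq, hdc⟩

lemma upper_lca (hz : IsZone t S) (hfin : S.Finite) {m : ℕ}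
    {z : List ℕ} {k : ℕ} (hzS : z ∈ S)
    (hA1 : m ≤ 2 * (Fo S z 0 k).ncard) (hA2 : (Fo S z 0 k).ncard ≤ m)
    {w : List ℕ} (hwC : w ∈ Conn t S)
    (hwU : w ∈ S \ Dn S z) (hwz : w ≠ z) {ρ : List ℕ}
    (hzρ : z ∈ Tset S ρ) (hwρ : w ∈ Tset S ρ) : Goal t S m := by
  have hnzw : ¬ z <+: w := by
    intro hp
    apply hwU.2
    refine ⟨⟨hwρ.1, hp, fun a h1 h2 => hwρ.2.2 a (hzρ.2.1.trans h1) h2⟩,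
      fun hc => hwz (Set.mem_singleton_iff.1 hc)⟩
  have hnwz : ¬ w <+: z := by
    intro hp
    by_cases he : w = z
    · exact hwz he
    · obtain ⟨c0, r, hzr⟩ := exists_cons_of_proper_pre hp he
      have haS : w ++ [c0] ∈ S := hzρ.2.2 (w ++ [c0])
        (hwρ.2.1.trans (List.prefix_append w [c0])) (by rw [hzr]; exact ⟨r, by simp⟩)
      exact hwC.2.2 c0 (lt_numChildren_of_isNode (hz.1 _ haS)) haS
  obtain ⟨aa, bb, t1, t2, he1, he2, hab⟩ := lcp_spec hnzw hnwz
  have hρc : ρ <+: lcp z w := pre_lcp hzρ.2.1 hwρ.2.1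
  have hcz : lcp z w <+: z := lcp_pre_left z w
  have hcS : lcp z w ∈ S := hzρ.2.2 _ hρc hcz
  have hcaz : lcp z w ++ [aa] <+: z := ⟨t1, by (conv_rhs => rw [he1]); simp⟩
  have hcbw : lcp z w ++ [bb] <+: w := ⟨t2, by (conv_rhs => rw [he2]); simp⟩
  have hz' : z ∈ Tset S (lcp z w ++ [aa]) :=
    ⟨hzρ.1, hcaz, fun x h1 h2 => hzρ.2.2 x (hρc.trans ((List.prefix_append _ [aa]).trans h1)) h2⟩
  have hw' : w ∈ Tset S (lcp z w ++ [bb]) :=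
    ⟨hwρ.1, hcbw, fun x h1 h2 => hwρ.2.2 x (hρc.trans ((List.prefix_append _ [bb]).trans h1)) h2⟩
  have hwDnc : w ∈ Dn S (lcp z w) := by
    refine ⟨tset_trans hw' (tset_child hcS (tset_base hw')), fun hcon => ?_⟩
    rw [Set.mem_singleton_iff] at hcon
    have hl := hcbw.length_le
    have h2 := congrArg List.length hcon
    simp only [List.length_append, List.length_cons, List.length_nil] at hl
    omega
  have haaN : aa < numChildren t (lcp z w) := lt_numChildren_of_isNode (hz.1 _ (tset_base hz'))
  have hbbN : bb < numChildren t (lcp z w) := lt_numChildren_of_isNode (hz.1 _ (tset_base hw'))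
  rcases Nat.lt_or_ge aa bb with hab' | hab'
  · refine upper_split (j2 := aa + 1) (k2 := numChildren t (lcp z w))
      hz hfin hzS hA1 hA2 hwC hcS hz' hwDnc (Nat.zero_le aa) (Nat.lt_succ_self aa)
      ?_ (fun i hi => by omega) (fo_disjoint (le_refl (aa + 1)))
    rintro ⟨i, _, hik, hw''⟩
    have : i = bb := tset_idx hw'' hw'
    omega
  · have hba : bb < aa := by omega
    refine upper_split (j1 := aa) (k1 := numChildren t (lcp z w)) (j2 := 0) (k2 := aa)
      hz hfin hzS hA1 hA2 hwC hcS hz' hwDnc (le_refl aa) haaN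
      ?_ (fun i hi => by omega) (fo_disjoint (le_refl aa)).symm
    rintro ⟨i, hij, _, hw''⟩
    have : i = bb := tset_idx hw'' hw'
    omega

end ZoneAux

namespace ZoneAux
open OTree List

open scoped Classical

variable {α : Type} {t : OTree α} {S : Set (List ℕ)}

lemma upper (hz : IsZone t S) (hfin : S.Finite) {m : ℕ}
    {z : List ℕ} {k : ℕ} (hzS : z ∈ S)
    (hA1 : m ≤ 2 * (Fo S z 0 k).ncard) (hA2 : (Fo S z 0 k).ncard ≤ m) :
    Goal t S m := by
  by_cases hw : ∀ x ∈ Conn t S, x ∈ S \ Dn S z → x = z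
  · have hDnAR : Dn S z = Fo S z 0 k ∪ Fo S z k (numChildren t z + k) := by
      rw [dn_eq_fo hz hzS (show numChildren t z ≤ numChildren t z + k by omega),
        ← fo_split (Nat.zero_le k) (by omega)]
    refine assemble5 (Fo S z 0 k) (Fo S z k (numChildren t z + k)) (S \ Dn S z) ∅ ∅
      (zone_fo hz hfin z 0 k) (zone_fo hz hfin z k _) (zone_up hz z hw)
      zone_empty zone_empty
      (fo_disjoint (le_refl k))
      (Set.disjoint_sdiff_right.mono_left (fun q hq => (le_of_eq hDnAR.symm) (Or.inl hq)))
      (disj_empty _) (disj_empty _)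
      (Set.disjoint_sdiff_right.mono_left (fun q hq => (le_of_eq hDnAR.symm) (Or.inr hq)))
      (disj_empty _) (disj_empty _) (disj_empty _) (disj_empty _) (disj_empty _)
      ?_ hA1 hA2
    rw [Set.union_empty, Set.union_empty, ← hDnAR, Set.union_diff_cancel (dn_subset z)]
  · push_neg at hw
    obtain ⟨w, hwC, hwU, hwz⟩ := hw
    rcases decomp hzS with hzT | ⟨rz, hrz, hzrz⟩
    · rcases decomp (conn_mem_S hwC) with hwT | ⟨rw', hrw, hwrw⟩
      · exact upper_lca hz hfin hzS hA1 hA2 hwC hwU hwz hzT hwT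
      · obtain ⟨π0, a, b, hπ0S, hab, hRform, hround, hcomp⟩ := root_setup hz hfin hrw
        obtain ⟨hwform, hwa, hwb⟩ := hRform rw' hrw
        have hw2 : w ∈ Tset S (π0 ++ [rw'.getLastD 0]) := by rwa [← hwform]
        refine upper_sep hz hfin hzS hA1 hA2 hwC (Tset S []) ∅ (Or.inl rfl) (Or.inr rfl)
          π0 π0 (j1 := 0) (k1 := 0) (j2 := a) (k2 := b + 1) ?_ ?_ ?_ ?_ ?_
        · intro q hq
          exact Or.inl (tset_trans hq.1 hzT)
        · intro q hq
          rcases hcomp q hq with h | ⟨i, h1, h2, h⟩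
          · exact Or.inl (Or.inl h)
          · exact Or.inr (Or.inr ⟨i, h1, by omega, h⟩)
        · rintro q (h | h)
          · exact absurd h (Set.notMem_empty q)
          · exact fo_subset _ _ _ h
        · rw [fo_empty (le_refl 0), Set.union_empty, Set.empty_union]
          exact top_fo_disjoint hπ0S
        · rw [fo_empty (le_refl 0), Set.union_empty]
          intro hcon
          exact Set.disjoint_left.1 (top_tset_disjoint hπ0S) hcon hw2
    · rcases decomp (conn_mem_S hwC) with hwT | ⟨rw', hrw, hwrw⟩
      · obtain ⟨π0, a, b, hπ0S, hab, hRform, hround, hcomp⟩ := root_setup hz hfin hrz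
        obtain ⟨hzform, hza, hzb⟩ := hRform rz hrz
        have hz2 : z ∈ Tset S (π0 ++ [rz.getLastD 0]) := by rwa [← hzform]
        refine upper_sep hz hfin hzS hA1 hA2 hwC ∅ (Tset S []) (Or.inr rfl) (Or.inl rfl)
          π0 π0 (j1 := a) (k1 := b + 1) (j2 := 0) (k2 := 0) ?_ ?_ ?_ ?_ ?_
        · intro q hq
          exact Or.inr (tset_sub_fo hza (by omega) (dn_sub_tset hz2 hq))
        · intro q hq
          rcases hcomp q hq with h | ⟨i, h1, h2, h⟩
          · exact Or.inr (Or.inl h)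
          · exact Or.inl (Or.inr ⟨i, h1, by omega, h⟩)
        · rintro q (h | h)
          · exact (tset_subset []) h
          · exact fo_subset _ _ _ h
        · rw [fo_empty (le_refl 0), Set.union_empty, Set.empty_union]
          exact (top_fo_disjoint hπ0S).symm
        · rw [Set.empty_union]
          rintro ⟨i, _, _, hcon⟩
          exact Set.disjoint_left.1 (top_tset_disjoint hπ0S) hwT hcon
      · by_cases hrr : rz = rw'
        · subst hrr
          exact upper_lca hz hfin hzS hA1 hA2 hwC hwU hwz hzrz hwrw
        · obtain ⟨π0, a, b, hπ0S, hab, hRform, hround, hcomp⟩ := root_setup hz hfin hrz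
          obtain ⟨hzform, hza, hzb⟩ := hRform rz hrz
          obtain ⟨hwform, hwa, hwb⟩ := hRform rw' hrw
          have hz2 : z ∈ Tset S (π0 ++ [rz.getLastD 0]) := by rwa [← hzform]
          have hw2 : w ∈ Tset S (π0 ++ [rw'.getLastD 0]) := by rwa [← hwform]
          have hazbw : rz.getLastD 0 ≠ rw'.getLastD 0 := by
            intro he
            apply hrr
            rw [hzform, hwform, ← he]
          rcases Nat.lt_or_ge (rz.getLastD 0) (rw'.getLastD 0) with hlt | hge
          · refine upper_sep hz hfin hzS hA1 hA2 hwC ∅ (Tset S []) (Or.inr rfl) (Or.inl rfl)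
              π0 π0 (j1 := a) (k1 := rz.getLastD 0 + 1) (j2 := rz.getLastD 0 + 1) (k2 := b + 1)
              ?_ ?_ ?_ ?_ ?_
            · intro q hq
              exact Or.inr (tset_sub_fo hza (by omega) (dn_sub_tset hz2 hq))
            · intro q hq
              rcases hcomp q hq with h | ⟨i, h1, h2, h⟩
              · exact Or.inr (Or.inl h)
              · rcases Nat.lt_or_ge i (rz.getLastD 0 + 1) with h' | h'
                · exact Or.inl (Or.inr ⟨i, h1, h', h⟩)
                · exact Or.inr (Or.inr ⟨i, h', by omega, h⟩)
            · rintro q (h | h)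
              · exact (tset_subset []) h
              · exact fo_subset _ _ _ h
            · rw [Set.empty_union]
              exact Set.disjoint_union_right.2
                ⟨(top_fo_disjoint hπ0S).symm, fo_disjoint (le_refl (rz.getLastD 0 + 1))⟩
            · rw [Set.empty_union]
              rintro ⟨i, _, hik, hcon⟩
              have := tset_idx hcon hw2
              omega
          · have hlt : rw'.getLastD 0 < rz.getLastD 0 := by omega
            refine upper_sep hz hfin hzS hA1 hA2 hwC ∅ (Tset S []) (Or.inr rfl) (Or.inl rfl)
              π0 π0 (j1 := rz.getLastD 0) (k1 := b + 1) (j2 := a) (k2 := rz.getLastD 0)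
              ?_ ?_ ?_ ?_ ?_
            · intro q hq
              exact Or.inr (tset_sub_fo (le_refl _) (by omega) (dn_sub_tset hz2 hq))
            · intro q hq
              rcases hcomp q hq with h | ⟨i, h1, h2, h⟩
              · exact Or.inr (Or.inl h)
              · rcases Nat.lt_or_ge i (rz.getLastD 0) with h' | h'
                · exact Or.inr (Or.inr ⟨i, h1, h', h⟩)
                · exact Or.inl (Or.inr ⟨i, h', by omega, h⟩)
            · rintro q (h | h)
              · exact (tset_subset []) h
              · exact fo_subset _ _ _ h
            · rw [Set.empty_union]
              exact Set.disjoint_union_right.2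
                ⟨(top_fo_disjoint hπ0S).symm, (fo_disjoint (le_refl (rz.getLastD 0))).symm⟩
            · rw [Set.empty_union]
              rintro ⟨i, hij, _, hcon⟩
              have := tset_idx hcon hw2
              omega

end ZoneAux


open OTree in
/-- a zone with more than `m ≥ 2` nodes can be partitioned into at most
five zones, one of which has at least `m/2` and at most `m` nodes. -/
theorem zone_split {α : Type} (t : OTree α) (S : Set (List ℕ)) (m : ℕ)
    (hm : 2 ≤ m) (hzone : IsZone t S) (hbig : m < S.ncard) :
    ∃ Z : Finset (Set (List ℕ)),
      IsZonePartition t S Z ∧ Z.card ≤ 5 ∧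
      ∃ A ∈ Z, m ≤ 2 * A.ncard ∧ A.ncard ≤ m := by
    classical
  open ZoneAux in
  have hfin : S.Finite := by
    by_contra h
    have h2 : S.Infinite := h
    rw [h2.ncard] at hbig
    omega
  open ZoneAux in
  suffices hgoal : Goal t S m by exact hgoal
  open ZoneAux in
  have hO3 : ∀ z₀, z₀ ∈ S → m < sig S z₀ → Goal t S m := by
    intro z₀ h1 h2
    obtain ⟨z, k, hzS, hA1, hA2⟩ :=
      greedy hzone hfin hm (sig S z₀) z₀ h1 (le_refl _) (by omega)
    exact upper hzone hfin hzS hA1 hA2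
  open ZoneAux in
  by_cases hR : (Rt S) = ∅
  · have hSeq : S = Tset S [] := by
      apply Set.Subset.antisymm
      · intro q hq
        rcases decomp hq with h | ⟨r, hr, _⟩
        · exact h
        · rw [hR] at hr
          exact absurd hr (Set.notMem_empty r)
      · exact tset_subset []
    have h0S : [] ∈ S := by
      obtain ⟨q, hq⟩ := Set.nonempty_of_ncard_ne_zero (s := S) (by omega)
      rw [hSeq] at hq
      exact mem_top hq [] List.nil_prefix
    refine hO3 [] h0S ?_
    show m < (Tset S []).ncard
    rw [← hSeq]
    exact hbig
  · obtain ⟨r₀, hr₀⟩ := Set.nonempty_iff_ne_empty.2 hR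
    obtain ⟨π0, a, b, hπ0S, hab, hRform, hround, hcomp⟩ := root_setup hzone hfin hr₀
    have hSun : S = Tset S [] ∪ Fo S π0 a (b + 1) := by
      apply Set.Subset.antisymm
      · intro q hq
        rcases hcomp q hq with h | ⟨i, h1, h2, h⟩
        · exact Or.inl h
        · exact Or.inr ⟨i, h1, by omega, h⟩
      · rintro q (h | h)
        · exact (tset_subset []) h
        · exact fo_subset _ _ _ h
    have hdisjTF : Disjoint (Tset S []) (Fo S π0 a (b + 1)) := top_fo_disjoint hπ0S
    have hcard : S.ncard
        = (Tset S []).ncard + ∑ x ∈ Finset.range (b + 1 - a), sig S (π0 ++ [a + x]) := by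
      conv_lhs => rw [hSun]
      rw [Set.ncard_union_eq hdisjTF (tset_finite hfin _) (fo_finite hfin _ _ _)]
      congr 1
      have h := fo_ncard hfin π0 a (b + 1 - a)
      rw [show a + (b + 1 - a) = b + 1 from by omega] at h
      exact h
    have hgex : ∃ jj, m ≤ 2 * ((Tset S []).ncard + ∑ x ∈ Finset.range jj, sig S (π0 ++ [a + x])) :=
      ⟨b + 1 - a, by rw [← hcard]; omega⟩
    obtain ⟨j', hspec, hminall⟩ : ∃ j',
        (m ≤ 2 * ((Tset S []).ncard + ∑ x ∈ Finset.range j', sig S (π0 ++ [a + x]))) ∧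
        ∀ jj, jj < j' →
          ¬ m ≤ 2 * ((Tset S []).ncard + ∑ x ∈ Finset.range jj, sig S (π0 ++ [a + x])) :=
      ⟨Nat.find hgex, Nat.find_spec hgex, fun jj hjj => Nat.find_min hgex hjj⟩
    have hjle : j' ≤ b + 1 - a := by
      by_contra hc
      exact hminall (b + 1 - a) (by omega) (by rw [← hcard]; omega)
    rcases Nat.eq_zero_or_pos j' with hj0 | hjpos
    · rw [hj0] at hspec
      simp only [Finset.range_zero, Finset.sum_empty, Nat.add_zero] at hspec
      by_cases hle : (Tset S []).ncard ≤ m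
      · refine assemble5 (Tset S []) (Fo S π0 a (b + 1)) ∅ ∅ ∅
          (zone_top hzone hfin) (zone_fo hzone hfin _ _ _) zone_empty zone_empty zone_empty
          hdisjTF (disj_empty _) (disj_empty _) (disj_empty _)
          (disj_empty _) (disj_empty _) (disj_empty _)
          (disj_empty _) (disj_empty _) (disj_empty _)
          ?_ hspec hle
        rw [Set.union_empty, Set.union_empty, Set.union_empty, ← hSun]
      · have h0S : [] ∈ S := by
          obtain ⟨q, hq⟩ := Set.nonempty_of_ncard_ne_zero
            (s := Tset S []) (by omega)
          exact mem_top hq [] List.nil_prefix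
        refine hO3 [] h0S ?_
        show m < (Tset S []).ncard
        omega
    · obtain ⟨j2, hj2⟩ : ∃ j2, j' = j2 + 1 := ⟨j' - 1, by omega⟩
      have hmin : ¬ m ≤ 2 * ((Tset S []).ncard + ∑ x ∈ Finset.range j2, sig S (π0 ++ [a + x])) :=
        hminall j2 (by omega)
      rw [hj2] at hspec
      rw [Finset.sum_range_succ] at hspec
      by_cases hle : (Tset S []).ncard + (∑ x ∈ Finset.range j2, sig S (π0 ++ [a + x])
          + sig S (π0 ++ [a + j2])) ≤ m
      · -- BRANCH-2
        have hAn : (Tset S [] ∪ Fo S π0 a (a + j2 + 1)).ncard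
            = (Tset S []).ncard + (∑ x ∈ Finset.range j2, sig S (π0 ++ [a + x])
              + sig S (π0 ++ [a + j2])) := by
          rw [Set.ncard_union_eq (top_fo_disjoint hπ0S) (tset_finite hfin _)
            (fo_finite hfin _ _ _)]
          congr 1
          have h := fo_ncard hfin π0 a (j2 + 1)
          rw [show a + (j2 + 1) = a + j2 + 1 from by omega] at h
          rw [h, Finset.sum_range_succ]
        refine assemble5 (Tset S [] ∪ Fo S π0 a (a + j2 + 1)) (Fo S π0 (a + j2 + 1) (b + 1)) ∅ ∅ ∅
          (zone_top_fo hzone hfin _ _ _) (zone_fo hzone hfin _ _ _)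
          zone_empty zone_empty zone_empty
          (Set.disjoint_union_left.2 ⟨top_fo_disjoint hπ0S, fo_disjoint (le_refl _)⟩)
          (disj_empty _) (disj_empty _) (disj_empty _)
          (disj_empty _) (disj_empty _) (disj_empty _)
          (disj_empty _) (disj_empty _) (disj_empty _)
          ?_ (by rw [hAn]; omega) (by rw [hAn]; omega)
        rw [Set.union_empty, Set.union_empty, Set.union_empty, Set.union_assoc,
          ← fo_split (by omega) (by omega), ← hSun]
      · have hσbig : m + 3 ≤ 2 * sig S (π0 ++ [a + j2]) := by omega
        by_cases hσle : sig S (π0 ++ [a + j2]) ≤ m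
        · -- BRANCH-3
          have hZ1n : (Fo S π0 (a + j2) (a + j2 + 1)).ncard = sig S (π0 ++ [a + j2]) := by
            rw [fo_single]
            rfl
          refine assemble5 (Fo S π0 (a + j2) (a + j2 + 1))
            (Tset S [] ∪ Fo S π0 a (a + j2)) (Fo S π0 (a + j2 + 1) (b + 1)) ∅ ∅
            (zone_fo hzone hfin _ _ _) (zone_top_fo hzone hfin _ _ _)
            (zone_fo hzone hfin _ _ _) zone_empty zone_empty
            (Set.disjoint_union_right.2
              ⟨(top_fo_disjoint hπ0S).symm, (fo_disjoint (le_refl (a + j2))).symm⟩)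
            (fo_disjoint (le_refl (a + j2 + 1)))
            (disj_empty _) (disj_empty _)
            (Set.disjoint_union_left.2 ⟨top_fo_disjoint hπ0S, fo_disjoint (by omega)⟩)
            (disj_empty _) (disj_empty _)
            (disj_empty _) (disj_empty _) (disj_empty _)
            ?_ (by rw [hZ1n]; omega) (by rw [hZ1n]; omega)
          rw [Set.union_empty, Set.union_empty]
          apply Set.Subset.antisymm
          · rintro q ((h | (h | h)) | h)
            · exact fo_subset _ _ _ h
            · exact (tset_subset []) h
            · exact fo_subset _ _ _ h
            · exact fo_subset _ _ _ h
          · intro q hq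
            rcases hcomp q hq with h | ⟨i, h1, h2, h⟩
            · exact Or.inl (Or.inr (Or.inl h))
            · rcases Nat.lt_or_ge i (a + j2) with h' | h'
              · exact Or.inl (Or.inr (Or.inr ⟨i, h1, h', h⟩))
              · rcases Nat.lt_or_ge i (a + j2 + 1) with h'' | h''
                · exact Or.inl (Or.inl ⟨i, h', h'', h⟩)
                · exact Or.inr ⟨i, h'', by omega, h⟩
        · exact hO3 (π0 ++ [a + j2]) (mem_of_sig_pos (by omega)) (by omega)
end

section
/- Let t be a finite ordered tree, S a zone with s nodes, and 0 < θ ≤ 1. Then S can be partitioned into at most 10·s^θ zones, each of size at most s^{1-θ}. -/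
namespace OTree

variable {α : Type}

theorem subtreeAux_append (p q : List ℕ) : ∀ (t : OTree α),
    subtreeAux (p ++ q) t = (subtreeAux p t).bind (subtreeAux q) := by
  induction p with
  | nil => intro t; simp [subtreeAux]
  | cons i p ih =>
    intro t
    obtain ⟨a, ts⟩ := t
    simp only [List.cons_append, subtreeAux, Option.bind_assoc]
    cases ts[i]? with
    | none => simp
    | some c => simp [ih]

theorem subtree_append (t : OTree α) (p q : List ℕ) :
    subtree t (p ++ q) = (subtree t p).bind (subtreeAux q) := subtreeAux_append p q t

theorem IsNode.prefix {t : OTree α} {p q : List ℕ} (h : IsNode t q) (hpq : p <+: q) :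
    IsNode t p := by
  obtain ⟨r, rfl⟩ := hpq
  rw [IsNode, subtree_append] at h
  cases hh : subtree t p with
  | none => rw [hh] at h; simp at h
  | some c => rw [IsNode, hh]; rfl

theorem isNode_concat {t : OTree α} {p : List ℕ} {i : ℕ} :
    IsNode t (p ++ [i]) ↔ i < numChildren t p := by
  rw [IsNode, subtree_append, numChildren]
  cases hh : subtree t p with
  | none => simp
  | some c =>
    obtain ⟨a, ts⟩ := c
    simp only [Option.bind_some, subtreeAux]
    cases h2 : ts[i]? with
    | none =>
      have hlen : ts.length ≤ i := List.getElem?_eq_none_iff.1 h2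
      simp only [Option.bind_none, Option.isSome_none]
      constructor
      · intro h; cases h
      · intro h; omega
    | some c2 =>
      have : i < ts.length := by
        by_contra hc
        rw [List.getElem?_eq_none_iff.2 (by omega)] at h2; cases h2
      simp [subtreeAux, this]

theorem nodes_finite : ∀ (t : OTree α), (nodes t).Finite := fun t => by
  obtain ⟨a, ts⟩ := t
  have IH : ∀ t' ∈ ts, (nodes t').Finite := fun t' h => nodes_finite t'
  have hsub : nodes (node a ts) ⊆ {([] : List ℕ)} ∪
      ⋃ (i : Fin ts.length), (List.cons i.1) '' nodes ts[i.1] := by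
    intro p hp
    cases p with
    | nil => exact Or.inl rfl
    | cons i p' =>
      right
      have hp' : (subtreeAux (i :: p') (node a ts)).isSome := hp
      simp only [subtreeAux] at hp'
      cases h2 : ts[i]? with
      | none => rw [h2] at hp'; simp at hp'
      | some c =>
        rw [h2] at hp'
        have hi : i < ts.length := by
          by_contra hc
          rw [List.getElem?_eq_none_iff.2 (by omega)] at h2; cases h2
        have : c = ts[i] := by
          have := List.getElem?_eq_getElem hi
          rw [h2] at this; exact Option.some_injective _ this
        subst this
        exact Set.mem_iUnion.2 ⟨⟨i, hi⟩, ⟨p', hp', rfl⟩⟩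
  exact Set.Finite.subset (Set.Finite.union (Set.finite_singleton _)
    (Set.finite_iUnion fun i => ((IH _ (ts.getElem_mem i.2)).image _))) hsub
termination_by t => sizeOf t
decreasing_by
  have h1 := List.sizeOf_lt_of_mem h
  simp only [OTree.node.sizeOf_spec]
  omega


section ZoneTheory
variable {α : Type}

def SubZ (S : Set (List ℕ)) (p : List ℕ) : Set (List ℕ) := {q | q ∈ S ∧ p <+: q}

def DesZ (S : Set (List ℕ)) (p : List ℕ) : Set (List ℕ) := {q | q ∈ S ∧ ∃ i, p ++ [i] <+: q}

def Ports (t : OTree α) (S : Set (List ℕ)) : Set (List ℕ) :=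
  {p | p ∈ S ∧ 0 < numChildren t p ∧ ∀ i < numChildren t p, p ++ [i] ∉ S}

def CleanZ (S : Set (List ℕ)) : Prop := [] ∈ S → ∀ p ∈ S, p ≠ [] → p.dropLast ∈ S

variable {t : OTree α} {S : Set (List ℕ)}

theorem IsZone.nodes_mem (hz : IsZone t S) {p : List ℕ} (hp : p ∈ S) : IsNode t p := hz.1 p hp

theorem IsZone.allOrNone (hz : IsZone t S) {p : List ℕ} (hp : p ∈ S) :
    (∀ i < numChildren t p, p ++ [i] ∈ S) ∨ (∀ i < numChildren t p, p ++ [i] ∉ S) := hz.2.1 p hp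

theorem IsZone.ports_ss (hz : IsZone t S) : (Ports t S).Subsingleton := hz.2.2.1

theorem IsZone.tops (hz : IsZone t S) : (∀ p ∈ S, ∀ q ∈ S, p ≠ [] → q ≠ [] →
    p.dropLast ∉ S → q.dropLast ∉ S → p.dropLast = q.dropLast ∧
    ∀ i, p.getLastD 0 ≤ i → i ≤ q.getLastD 0 → p.dropLast ++ [i] ∈ S) := hz.2.2.2

theorem eq_dropLast_concat {p : List ℕ} (h : p ≠ []) : p.dropLast ++ [p.getLastD 0] = p := by
  simp [List.getLastD_eq_getLast?, List.getLast?_eq_getLast h, List.dropLast_append_getLast h]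

theorem concat_ne_nil (π : List ℕ) (i : ℕ) : π ++ [i] ≠ [] := by simp

theorem prefix_dropLast {r q : List ℕ} (h : r <+: q) (hlen : r.length < q.length) :
    r <+: q.dropLast := by
  obtain ⟨s, rfl⟩ := h
  have hs : s ≠ [] := by rintro rfl; simp at hlen
  rw [List.dropLast_append_of_ne_nil hs]
  exact ⟨s.dropLast, rfl⟩

theorem prefix_concat_inj {p q : List ℕ} {i j : ℕ} (h1 : p ++ [i] <+: q)
    (h2 : p ++ [j] <+: q) : i = j := by
  have h3 := List.prefix_of_prefix_length_le h1 h2 (by simp)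
  have h4 := h3.eq_of_length (by simp)
  simpa using h4

theorem index_lt (hz : IsZone t S) {p q : List ℕ} {i : ℕ} (hq : q ∈ S)
    (hpre : p ++ [i] <+: q) : i < numChildren t p :=
  isNode_concat.1 ((hz.nodes_mem hq).prefix hpre)

/-- Every member has a top ancestor. -/
theorem exists_top (hz : IsZone t S) : ∀ p ∈ S, ∃ r, r ∈ S ∧ r <+: p ∧
    (r = [] ∨ r.dropLast ∉ S) := by
  intro p
  generalize hn : p.length = n
  induction n using Nat.strong_induction_on generalizing p with
  | _ n ih =>
  intro hp
  by_cases h0 : p = []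
  · exact ⟨p, hp, List.prefix_refl p, Or.inl h0⟩
  by_cases h1 : p.dropLast ∈ S
  · obtain ⟨r, hr1, hr2, hr3⟩ := ih p.dropLast.length (by
      subst hn; rw [List.length_dropLast]
      have : p.length ≠ 0 := by simpa using h0
      omega) p.dropLast rfl h1
    exact ⟨r, hr1, hr2.trans (List.dropLast_prefix p), hr3⟩
  · exact ⟨p, hp, List.prefix_refl p, Or.inr h1⟩

/-- Convexity with a parentless anchor. -/
theorem mem_of_between_anchor (hz : IsZone t S) {a r q : List ℕ} (ha : a ∈ S) (hane : a ≠ [])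
    (hap : a.dropLast ∉ S) (hq : q ∈ S) (h1 : a <+: r) (h2 : r <+: q) : r ∈ S := by
  generalize hn : q.length = n
  induction n using Nat.strong_induction_on generalizing q with
  | _ n ih =>
  by_cases heq : r = q
  · exact heq ▸ hq
  have hlt : r.length < q.length := by
    rcases Nat.lt_or_ge r.length q.length with h | h
    · exact h
    · exact absurd (h2.eq_of_length (le_antisymm h2.length_le h)) heq
  have hpre : r <+: q.dropLast := prefix_dropLast h2 hlt
  by_cases hd : q.dropLast ∈ S
  · exact ih q.dropLast.length (by subst hn; rw [List.length_dropLast]; omega) hd hpre rfl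
  · exfalso
    have hqne : q ≠ [] := by
      rintro rfl
      exact hane (List.prefix_nil.1 (h1.trans h2))
    have hdd := (hz.tops a ha q hq hane hqne hap hd).1
    have hlen : a.length = q.length := by
      have h3 : a.dropLast.length = q.dropLast.length := by rw [hdd]
      rw [List.length_dropLast, List.length_dropLast] at h3
      have ha' : a.length ≠ 0 := by simpa using hane
      have hq' : q.length ≠ 0 := by simpa using hqne
      omega
    have : a.length ≤ r.length := h1.length_le
    omega

/-- Downward closure for clean zones containing the root. -/
theorem mem_of_prefix_root (hz : IsZone t S) (hcl : CleanZ S) (h0 : [] ∈ S) :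
    ∀ q ∈ S, ∀ r, r <+: q → r ∈ S := by
  intro q
  generalize hn : q.length = n
  induction n using Nat.strong_induction_on generalizing q with
  | _ n ih =>
  intro hq r hr
  by_cases heq : r = q
  · exact heq ▸ hq
  have hqne : q ≠ [] := by rintro rfl; exact heq (List.prefix_nil.1 hr)
  have hlt : r.length < q.length := by
    rcases Nat.lt_or_ge r.length q.length with h | h
    · exact h
    · exact absurd (hr.eq_of_length (le_antisymm hr.length_le h)) heq
  exact ih q.dropLast.length (by subst hn; rw [List.length_dropLast]; omega)
    q.dropLast rfl (hcl h0 q hq hqne) r (prefix_dropLast hr hlt)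

/-- Convexity for clean zones. -/
theorem mem_of_between (hz : IsZone t S) (hcl : CleanZ S) {p r q : List ℕ} (hp : p ∈ S)
    (hq : q ∈ S) (h1 : p <+: r) (h2 : r <+: q) : r ∈ S := by
  by_cases h0 : [] ∈ S
  · exact mem_of_prefix_root hz hcl h0 q hq r h2
  · obtain ⟨a, ha, hap, hcase⟩ := exists_top hz p hp
    rcases hcase with rfl | htop
    · exact absurd ha h0
    · exact mem_of_between_anchor hz ha (by rintro rfl; exact h0 ha) htop hq
        (hap.trans h1) h2

/-- Siblings interval membership. -/
theorem sib_mem (hz : IsZone t S) {π : List ℕ} {i j l : ℕ} (hi : π ++ [i] ∈ S)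
    (hj : π ++ [j] ∈ S) (hil : i ≤ l) (hlj : l ≤ j) : π ++ [l] ∈ S := by
  by_cases hπ : π ∈ S
  · rcases hz.allOrNone hπ with hall | hnone
    · exact hall l (lt_of_le_of_lt hlj (index_lt hz hj (List.prefix_refl _)))
    · exact absurd hi (hnone i (index_lt hz hi (List.prefix_refl _)))
  · have h := (hz.tops (π ++ [i]) hi (π ++ [j]) hj (concat_ne_nil _ _) (concat_ne_nil _ _)
      (by rwa [List.dropLast_concat]) (by rwa [List.dropLast_concat])).2 l
        (by rwa [List.getLastD_concat]) (by rwa [List.getLastD_concat])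
    rwa [List.dropLast_concat] at h

/-- All children of a node having some proper descendant in a clean zone are in the zone. -/
theorem children_mem (hz : IsZone t S) (hcl : CleanZ S) {p q : List ℕ} (hp : p ∈ S)
    (hq : q ∈ S) (hqne : q ≠ p) (hpre : p <+: q) : ∀ i < numChildren t p, p ++ [i] ∈ S := by
  obtain ⟨s, rfl⟩ := hpre
  have hs : s ≠ [] := by rintro rfl; simp at hqne
  obtain ⟨h0, s', rfl⟩ := List.exists_cons_of_ne_nil hs
  have hch : p ++ [h0] ∈ S := mem_of_between hz hcl hp hq ⟨[h0], rfl⟩ ⟨s', by simp⟩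
  rcases hz.allOrNone hp with hall | hnone
  · exact hall
  · exact absurd hch (hnone h0 (index_lt hz hch (List.prefix_refl _)))

theorem SubZ_subset {p : List ℕ} : SubZ S p ⊆ S := fun _ h => h.1
theorem DesZ_subset {p : List ℕ} : DesZ S p ⊆ S := fun _ h => h.1

theorem SubZ_eq_insert {p : List ℕ} (hp : p ∈ S) : SubZ S p = insert p (DesZ S p) := by
  ext q; constructor
  · rintro ⟨hq, s, rfl⟩
    rcases s with _ | ⟨h0, s'⟩
    · exact Or.inl (by simp)
    · exact Or.inr ⟨hq, h0, ⟨s', by simp⟩⟩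
  · rintro (rfl | ⟨hq, i, hi⟩)
    · exact ⟨hp, List.prefix_refl _⟩
    · exact ⟨hq, (List.prefix_append p [i]).trans hi⟩

theorem ncard_SubZ (hfin : S.Finite) {p : List ℕ} (hp : p ∈ S) :
    (SubZ S p).ncard = (DesZ S p).ncard + 1 := by
  rw [SubZ_eq_insert hp]
  rw [Set.ncard_insert_of_notMem ?_ (hfin.subset DesZ_subset)]
  rintro ⟨-, i, hpre⟩
  have := hpre.length_le
  simp at this

/-- The port is a dead end. -/
theorem port_sub (hz : IsZone t S) (hcl : CleanZ S) {c : List ℕ} (hc : c ∈ Ports t S) :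
    SubZ S c = {c} := by
  ext q; constructor
  · rintro ⟨hq, s, rfl⟩
    rcases s with _ | ⟨h0, s'⟩
    · simp
    · exfalso
      have hch : c ++ [h0] ∈ S := mem_of_between hz hcl hc.1 hq ⟨[h0], rfl⟩ ⟨s', by simp⟩
      exact hc.2.2 h0 (index_lt hz hch (List.prefix_refl _)) hch
  · rintro rfl; exact ⟨hc.1, List.prefix_refl _⟩

/-- Generic subforest piece: members of `S` extending `π ++ [i]` for some `i` with `P i`. -/
def PieceZ (S : Set (List ℕ)) (π : List ℕ) (P : ℕ → Prop) : Set (List ℕ) :=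
  {q | q ∈ S ∧ ∃ i, P i ∧ π ++ [i] <+: q}

theorem PieceZ_subset {π : List ℕ} {P : ℕ → Prop} : PieceZ S π P ⊆ S := fun _ h => h.1

theorem PieceZ_congr {π : List ℕ} {P Q : ℕ → Prop} (h : ∀ i, P i ↔ Q i) :
    PieceZ S π P = PieceZ S π Q := by
  unfold PieceZ; ext q; constructor
  · rintro ⟨hq, i, hi, hpre⟩; exact ⟨hq, i, (h i).1 hi, hpre⟩
  · rintro ⟨hq, i, hi, hpre⟩; exact ⟨hq, i, (h i).2 hi, hpre⟩

theorem PieceZ_disjoint {π : List ℕ} {P Q : ℕ → Prop}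
    (h : ∀ i j, P i → Q j → i ≠ j) : Disjoint (PieceZ S π P) (PieceZ S π Q) := by
  rw [Set.disjoint_left]
  rintro q ⟨hq, i, hi, hprei⟩ ⟨-, j, hj, hprej⟩
  exact h i j hi hj (prefix_concat_inj hprei hprej)

theorem DesZ_eq_pieceZ (hz : IsZone t S) {p : List ℕ} :
    DesZ S p = PieceZ S p (· ∈ Finset.range (numChildren t p)) := by
  ext q; constructor
  · rintro ⟨hq, i, hpre⟩
    exact ⟨hq, i, Finset.mem_range.2 (index_lt hz hq hpre), hpre⟩
  · rintro ⟨hq, i, -, hpre⟩; exact ⟨hq, i, hpre⟩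

theorem ncard_pieceZ_finset (hfin : S.Finite) (π : List ℕ) (I : Finset ℕ) :
    (PieceZ S π (· ∈ I)).ncard = ∑ i ∈ I, (SubZ S (π ++ [i])).ncard := by
  induction I using Finset.induction with
  | empty =>
    have h0 : PieceZ S π (· ∈ (∅ : Finset ℕ)) = (∅ : Set (List ℕ)) := by
      ext q; simp [PieceZ]
    rw [h0, Finset.sum_empty, Set.ncard_empty]
  | @insert a I ha ih =>
    have hsplit : PieceZ S π (· ∈ insert a I) = SubZ S (π ++ [a]) ∪ PieceZ S π (· ∈ I) := by
      ext q; constructor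
      · rintro ⟨hq, i, hi, hpre⟩
        rcases Finset.mem_insert.1 hi with rfl | hi
        · exact Or.inl ⟨hq, hpre⟩
        · exact Or.inr ⟨hq, i, hi, hpre⟩
      · rintro (⟨hq, hpre⟩ | ⟨hq, i, hi, hpre⟩)
        · exact ⟨hq, a, Finset.mem_insert_self a I, hpre⟩
        · exact ⟨hq, i, Finset.mem_insert_of_mem hi, hpre⟩
    have hdis : Disjoint (SubZ S (π ++ [a])) (PieceZ S π (· ∈ I)) := by
      rw [Set.disjoint_left]
      rintro q ⟨hq, hprea⟩ ⟨-, i, hi, hprei⟩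
      exact ha ((prefix_concat_inj hprea hprei) ▸ hi)
    rw [hsplit, Set.ncard_union_eq hdis (hfin.subset SubZ_subset)
      (hfin.subset PieceZ_subset), ih, Finset.sum_insert ha]

/-- A piece is a zone. -/
theorem pieceZ_zone (hz : IsZone t S) (π : List ℕ) (P : ℕ → Prop)
    (hP : ∀ i j l, P i → P j → i ≤ l → l ≤ j → P l)
    (hmem : ∀ i, P i → ∀ q ∈ S, π ++ [i] <+: q → π ++ [i] ∈ S)
    (hconv : ∀ i, P i → π ++ [i] ∈ S → ∀ q ∈ S, ∀ r, π ++ [i] <+: r → r <+: q → r ∈ S) :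
    IsZone t (PieceZ S π P) ∧ Ports t (PieceZ S π P) ⊆ Ports t S ∧ CleanZ (PieceZ S π P) := by
  set A := PieceZ S π P with hA
  have hsub : A ⊆ S := PieceZ_subset
  -- membership transfer for children
  have htrans : ∀ q ∈ A, ∀ j, (q ++ [j] ∈ A ↔ q ++ [j] ∈ S) := by
    rintro q ⟨hq, i, hi, hpre⟩ j
    exact ⟨fun h => hsub h, fun h => ⟨h, i, hi, hpre.trans (List.prefix_append q [j])⟩⟩
  have hports : Ports t A ⊆ Ports t S := by
    rintro q ⟨hq, hn0, hnc⟩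
    exact ⟨hsub hq, hn0, fun j hj hjS => hnc j hj ((htrans q hq j).2 hjS)⟩
  -- parentless characterization
  have hpl : ∀ q ∈ A, q.dropLast ∉ A → ∃ i, P i ∧ q = π ++ [i] := by
    rintro q ⟨hq, i, hi, hpre⟩ hd
    have hmi : π ++ [i] ∈ S := hmem i hi q hq hpre
    by_cases heq : q = π ++ [i]
    · exact ⟨i, hi, heq⟩
    exfalso
    have hlt : (π ++ [i]).length < q.length := by
      rcases Nat.lt_or_ge (π ++ [i]).length q.length with h | h
      · exact h
      · exact (heq ((hpre.eq_of_length (le_antisymm hpre.length_le h)).symm)).elim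
    have hdpre : π ++ [i] <+: q.dropLast := prefix_dropLast hpre hlt
    have hdS : q.dropLast ∈ S :=
      hconv i hi hmi q hq q.dropLast hdpre (List.dropLast_prefix q)
    exact hd ⟨hdS, i, hi, hdpre⟩
  refine ⟨⟨fun p hp => hz.nodes_mem (hsub hp), ?_, ?_, ?_⟩, hports, ?_⟩
  · -- all or none
    intro q hq
    rcases hz.allOrNone (hsub hq) with hall | hnone
    · exact Or.inl fun j hj => (htrans q hq j).2 (hall j hj)
    · exact Or.inr fun j hj h => hnone j hj (hsub h)
  · exact hz.ports_ss.anti hports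
  · -- tops
    intro q1 h1 q2 h2 hne1 hne2 hd1 hd2
    obtain ⟨i1, hi1, rfl⟩ := hpl q1 h1 hd1
    obtain ⟨i2, hi2, rfl⟩ := hpl q2 h2 hd2
    rw [List.dropLast_concat, List.dropLast_concat]
    refine ⟨rfl, fun l hl1 hl2 => ?_⟩
    rw [List.getLastD_concat] at hl1 hl2
    have hsibs : π ++ [l] ∈ S := sib_mem hz (hsub h1) (hsub h2) hl1 hl2
    exact ⟨hsibs, l, hP i1 i2 l hi1 hi2 hl1 hl2, List.prefix_refl _⟩
  · -- clean
    rintro ⟨-, i, -, hpre⟩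
    have := hpre.length_le
    simp at this

theorem desZ_mono {p r q : List ℕ} (h : r ∈ DesZ S p) (hq : q ∈ S) (hrq : r <+: q) :
    q ∈ DesZ S p := ⟨hq, h.2.choose, h.2.choose_spec.trans hrq⟩

theorem self_not_mem_desZ {p : List ℕ} : p ∉ DesZ S p := by
  rintro ⟨-, i, hpre⟩
  have := hpre.length_le
  simp at this

/-- The upper part `S \ DesZ S p` is a zone. -/
theorem above_zone (hz : IsZone t S) (hcl : CleanZ S) {p : List ℕ} (hp : p ∈ S)
    (hport : Ports t S ⊆ DesZ S p) :
    IsZone t (S \ DesZ S p) ∧ CleanZ (S \ DesZ S p) ∧ p ∈ S \ DesZ S p := by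
  set W := S \ DesZ S p with hW
  have hpW : p ∈ W := ⟨hp, self_not_mem_desZ⟩
  have hsub : W ⊆ S := Set.diff_subset
  -- key: for q ∈ W different from p, children membership transfers
  have key : ∀ q ∈ W, q ≠ p → ∀ j, (q ++ [j] ∈ W ↔ q ++ [j] ∈ S) := by
    rintro q ⟨hq, hqd⟩ hqp j
    refine ⟨fun h => hsub h, fun h => ⟨h, ?_⟩⟩
    rintro ⟨-, i, hpre⟩
    have hle : (p ++ [i]).length ≤ (q ++ [j]).length := hpre.length_le
    simp only [List.length_append, List.length_cons, List.length_nil] at hle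
    rcases Nat.lt_or_ge p.length q.length with hlt | hge
    · have : p ++ [i] <+: q := List.prefix_of_prefix_length_le hpre
        (List.prefix_append q [j]) (by simp; omega)
    -- then q ∈ DesZ S p
      exact hqd ⟨hq, i, this⟩
    · have hlen : (p ++ [i]).length = (q ++ [j]).length := by simp at hle ⊢; omega
      have heq : p ++ [i] = q ++ [j] := hpre.eq_of_length hlen
      have : p = q := by
        have := congrArg List.dropLast heq
        rwa [List.dropLast_concat, List.dropLast_concat] at this
      exact hqp this.symm
  refine ⟨⟨fun q hq => hz.nodes_mem (hsub hq), ?_, ?_, ?_⟩, ?_, hpW⟩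
  · -- all or none
    intro q hq
    by_cases hqp : q = p
    · subst hqp
      refine Or.inr fun j hj hmem => ?_
      exact hmem.2 ⟨hsub hmem, j, List.prefix_refl _⟩
    · rcases hz.allOrNone (hsub hq) with hall | hnone
      · exact Or.inl fun j hj => (key q hq hqp j).2 (hall j hj)
      · exact Or.inr fun j hj h => hnone j hj (hsub h)
  · -- ports subsingleton : Ports W ⊆ {p}
    have hsubp : Ports t W ⊆ {p} := by
      rintro q ⟨hq, hn0, hnc⟩
      by_contra hqp
      have : q ∈ Ports t S := by
        refine ⟨hsub hq, hn0, fun j hj hjS => hnc j hj ((key q hq hqp j).2 hjS)⟩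
      exact hq.2 (hport this)
    exact Set.subsingleton_singleton.anti hsubp
  · -- tops
    intro q1 h1 q2 h2 hne1 hne2 hd1 hd2
    have hds : ∀ q ∈ W, q.dropLast ∉ W → q.dropLast ∉ S := by
      rintro q ⟨hq, hqd⟩ hd hdS
      exact hd ⟨hdS, fun hdes => hqd (desZ_mono hdes hq (List.dropLast_prefix q))⟩
    have hd1' := hds q1 h1 hd1
    have hd2' := hds q2 h2 hd2
    obtain ⟨hdd, hint⟩ := hz.tops q1 (hsub h1) q2 (hsub h2) hne1 hne2 hd1' hd2'
    refine ⟨hdd, fun l hl1 hl2 => ?_⟩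
    have hlS := hint l hl1 hl2
    refine ⟨hlS, ?_⟩
    rintro ⟨-, i, hpre⟩
    have hle : (p ++ [i]).length ≤ (q1.dropLast ++ [l]).length := hpre.length_le
    rcases Nat.lt_or_ge p.length q1.dropLast.length with hlt | hge
    · have hppre : p ++ [i] <+: q1.dropLast := List.prefix_of_prefix_length_le hpre
        (List.prefix_append _ [l]) (by
          simp only [List.length_append, List.length_cons, List.length_nil]; omega)
      exact h1.2 ⟨h1.1, i, hppre.trans (List.dropLast_prefix q1)⟩
    · have hlen : (p ++ [i]).length = (q1.dropLast ++ [l]).length := by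
        simp only [List.length_append, List.length_cons, List.length_nil] at hle ⊢; omega
      have heq : p ++ [i] = q1.dropLast ++ [l] := hpre.eq_of_length hlen
      have hpq : p = q1.dropLast := by
        have := congrArg List.dropLast heq
        rwa [List.dropLast_concat, List.dropLast_concat] at this
      exact hd1' (hpq ▸ hp)
  · -- clean
    rintro ⟨h0, -⟩ q hq hqne
    have hdS : q.dropLast ∈ S := hcl h0 q (hsub hq) hqne
    exact ⟨hdS, fun hdes => hq.2 (desZ_mono hdes hq.1 (List.dropLast_prefix q))⟩


theorem partition_empty : IsZonePartition t ∅ (∅ : Finset (Set (List ℕ))) := by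
  refine ⟨fun A hA => absurd hA (by simp), ?_, by simp⟩
  simp [Set.PairwiseDisjoint]

theorem partition_mem_subset {Z : Finset (Set (List ℕ))} (h : IsZonePartition t S Z)
    {X : Set (List ℕ)} (hX : X ∈ Z) : X ⊆ S := by
  rw [← h.2.2]
  exact Set.subset_sUnion_of_mem hX

noncomputable local instance : DecidableEq (Set (List ℕ)) := Classical.decEq _

theorem partition_union {S1 S2 : Set (List ℕ)} {Z1 Z2 : Finset (Set (List ℕ))}
    (h1 : IsZonePartition t S1 Z1) (h2 : IsZonePartition t S2 Z2)
    (hd : Disjoint S1 S2) : IsZonePartition t (S1 ∪ S2) (Z1 ∪ Z2) := by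
  refine ⟨?_, ?_, ?_⟩
  · intro A hA
    rcases Finset.mem_union.1 hA with h | h
    · exact h1.1 A h
    · exact h2.1 A h
  · intro X hX Y hY hXY
    simp only [Finset.coe_union, Set.mem_union, Finset.mem_coe] at hX hY
    rcases hX with hX | hX <;> rcases hY with hY | hY
    · exact h1.2.1 hX hY hXY
    · exact Disjoint.mono (partition_mem_subset h1 hX) (partition_mem_subset h2 hY) hd
    · exact Disjoint.mono (partition_mem_subset h2 hX) (partition_mem_subset h1 hY) hd.symm
    · exact h2.2.1 hX hY hXY
  · rw [Finset.coe_union, Set.sUnion_union, h1.2.2, h2.2.2]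

/-- Partition of a single (small) zone. -/
theorem partition_single (hz : IsZone t S) :
    ∃ Z : Finset (Set (List ℕ)), IsZonePartition t S Z ∧ Z.card ≤ 1 ∧
      ∀ X ∈ Z, X = S := by
  by_cases hS : S = ∅
  · subst hS
    exact ⟨∅, partition_empty, by simp, by simp⟩
  · refine ⟨{S}, ⟨?_, ?_, by simp⟩, by simp, by simp⟩
    · intro A hA; rw [Finset.mem_singleton] at hA; subst hA; exact hz
    · simp [Set.PairwiseDisjoint, Set.Pairwise]

/-- The greedy scan. -/
theorem greedy_scan (m : ℕ) (hm : 1 ≤ m) (f : ℕ → ℕ) (K : ℕ)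
    (hf : ∀ i < K, f i ≤ m) (htot : m ≤ ∑ i ∈ Finset.range K, f i) :
    ∃ lo j, lo ≤ j ∧ j < K ∧
      (m - m / 2) ≤ ∑ i ∈ Finset.Icc lo j, f i ∧ (∑ i ∈ Finset.Icc lo j, f i) ≤ m ∧
      (∑ i ∈ Finset.range lo, f i) < m - m / 2 := by
  classical
  set h := m - m / 2 with hh
  have hh1 : 1 ≤ h := by omega
  have hK : 0 < K := by
    rcases Nat.eq_zero_or_pos K with rfl | hp
    · simp at htot; omega
    · exact hp
  have hPK : h ≤ ∑ i ∈ Finset.range (K - 1 + 1), f i := by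
    have hKK : K - 1 + 1 = K := by omega
    rw [hKK]; omega
  have hPex : ∃ j, h ≤ ∑ i ∈ Finset.range (j + 1), f i := ⟨K - 1, hPK⟩
  set j := Nat.find hPex with hj
  have hPj : h ≤ ∑ i ∈ Finset.range (j + 1), f i := Nat.find_spec hPex
  have hjmin : ∀ j' < j, ¬ h ≤ ∑ i ∈ Finset.range (j' + 1), f i :=
    fun j' hj' => Nat.find_min hPex hj'
  have hjK : j < K := by
    by_contra hge
    push_neg at hge
    rcases Nat.lt_or_ge (K - 1) j with hlt | hge2
    · exact hjmin (K - 1) hlt hPK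
    · omega
  have hprev : ∑ i ∈ Finset.range j, f i < h := by
    rcases Nat.eq_zero_or_pos j with hj0 | hjpos
    · rw [hj0]; simp; omega
    · have hmin := hjmin (j - 1) (by omega)
      have : j - 1 + 1 = j := by omega
      rw [this] at hmin
      omega
  have hsum : ∑ i ∈ Finset.range (j + 1), f i = (∑ i ∈ Finset.range j, f i) + f j :=
    Finset.sum_range_succ f j
  by_cases hle : ∑ i ∈ Finset.range (j + 1), f i ≤ m
  · refine ⟨0, j, Nat.zero_le _, hjK, ?_, ?_, by simp; omega⟩
    · have hIcc : Finset.Icc 0 j = Finset.range (j + 1) := by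
        ext x; simp [Nat.lt_succ_iff]
      rw [hIcc]; exact hPj
    · have hIcc : Finset.Icc 0 j = Finset.range (j + 1) := by
        ext x; simp [Nat.lt_succ_iff]
      rw [hIcc]; exact hle
  · push_neg at hle
    have hfj := hf j hjK
    refine ⟨j, j, le_refl _, hjK, ?_, ?_, hprev⟩
    · rw [Finset.Icc_self, Finset.sum_singleton]; omega
    · rw [Finset.Icc_self, Finset.sum_singleton]; exact hfj

/-- Combined accounting. -/
theorem acct (m h s1 s2 s3 sW x1 x2 x3 xW xZ : ℕ)
    (hm : 1 ≤ m) (hh : m ≤ 2 * h)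
    (hXZ : xZ ≤ x1 + x2 + x3 + xW)
    (h2 : x2 ≤ m) (h2m : s2 ≤ m)
    (h1 : x1 ≤ m ∨ x1 + 4 * m ≤ 8 * s1)
    (h3 : x3 ≤ m ∨ x3 + 4 * m ≤ 8 * s3)
    (hWx : xW ≤ m ∨ xW + m ≤ 8 * sW)
    (hd : m ≤ s1 + s2 + s3)
    (hn : m < s1 + s2 + s3 + sW) :
    (xZ + m ≤ 8 * (s1 + s2 + s3 + sW)) ∧
    (h ≤ s2 → xZ + 4 * m ≤ 8 * (s1 + s2 + s3 + sW)) :=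
  ⟨by omega, fun _ => by omega⟩

theorem zone_empty : IsZone t (∅ : Set (List ℕ)) := by
  refine ⟨fun p hp => absurd hp (Set.notMem_empty p),
    fun p hp => absurd hp (Set.notMem_empty p), ?_,
    fun p hp => absurd hp (Set.notMem_empty p)⟩
  rintro q ⟨hq, -⟩
  exact absurd hq (Set.notMem_empty q)

theorem clean_empty : CleanZ (∅ : Set (List ℕ)) := fun h => absurd h (Set.notMem_empty _)

/-- The four-way split step. -/
theorem four_split {t : OTree α} {S : Set (List ℕ)} {m n : ℕ} (hm : 1 ≤ m)
    (hfin : S.Finite) (hz : IsZone t S) (hcl : CleanZ S)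
    (hbig : m < S.ncard) (hnn : S.ncard ≤ n + 1)
    (getC : ∀ X : Set (List ℕ), X ⊆ S → IsZone t X → CleanZ X → X.ncard ≤ n →
      ∃ ZX : Finset (Set (List ℕ)), IsZonePartition t X ZX ∧ (∀ A ∈ ZX, A.ncard ≤ m) ∧
        (m * ZX.card ≤ m ∨ m * ZX.card + m ≤ 8 * X.ncard) ∧
        (Ports t X = ∅ → (m * ZX.card ≤ m ∨ m * ZX.card + 4 * m ≤ 8 * X.ncard)))
    (π : List ℕ) (lo jm : ℕ) (hloj : lo ≤ jm) (hjK : jm < numChildren t π)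
    (hmem : ∀ i, ∀ q ∈ S, π ++ [i] <+: q → π ++ [i] ∈ S)
    (hs2m : (PieceZ S π (fun i => lo ≤ i ∧ i ≤ jm)).ncard ≤ m)
    (hs2pos : 1 ≤ (PieceZ S π (fun i => lo ≤ i ∧ i ≤ jm)).ncard)
    (hmed : Ports t S = ∅ → m - m / 2 ≤ (PieceZ S π (fun i => lo ≤ i ∧ i ≤ jm)).ncard)
    (hportmid : Ports t S ⊆ PieceZ S π (fun i => lo ≤ i ∧ i ≤ jm))
    (hDes : m ≤ (DesZ S π).ncard)
    (hWpart : S \ DesZ S π = ∅ ∨ π ∈ S) :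
    ∃ Z : Finset (Set (List ℕ)), IsZonePartition t S Z ∧ (∀ A ∈ Z, A.ncard ≤ m) ∧
      (m * Z.card + m ≤ 8 * S.ncard) ∧
      (Ports t S = ∅ → m * Z.card + 4 * m ≤ 8 * S.ncard) := by
  classical
  set K := numChildren t π with hK
  set T1 := PieceZ S π (fun i => i < lo) with hT1
  set T2 := PieceZ S π (fun i => lo ≤ i ∧ i ≤ jm) with hT2
  set T3 := PieceZ S π (fun i => jm < i ∧ i < K) with hT3
  set W := S \ DesZ S π with hWdef
  have mkzone : ∀ P : ℕ → Prop, (∀ i j l, P i → P j → i ≤ l → l ≤ j → P l) →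
      IsZone t (PieceZ S π P) ∧ Ports t (PieceZ S π P) ⊆ Ports t S ∧ CleanZ (PieceZ S π P) :=
    fun P hP => pieceZ_zone hz π P hP (fun i _ q hq hpre => hmem i q hq hpre)
      (fun i _ hmi q hq r h1 h2 => mem_of_between hz hcl hmi hq h1 h2)
  obtain ⟨hz1, hp1, hcl1⟩ := mkzone (fun i => i < lo) (by intro i j l h1 h2 h3 h4; omega)
  obtain ⟨hz2, hp2, hcl2⟩ := mkzone (fun i => lo ≤ i ∧ i ≤ jm)
    (by intro i j l h1 h2 h3 h4; omega)
  obtain ⟨hz3, hp3, hcl3⟩ := mkzone (fun i => jm < i ∧ i < K)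
    (by intro i j l h1 h2 h3 h4; omega)
  -- decomposition of DesZ
  have hdes3 : DesZ S π = T1 ∪ T2 ∪ T3 := by
    rw [DesZ_eq_pieceZ hz (p := π)]
    ext q; constructor
    · rintro ⟨hq, i, hiK, hpre⟩
      rw [Finset.mem_range] at hiK
      by_cases hc1 : i < lo
      · exact Or.inl (Or.inl ⟨hq, i, hc1, hpre⟩)
      by_cases hc2 : i ≤ jm
      · exact Or.inl (Or.inr ⟨hq, i, ⟨by omega, hc2⟩, hpre⟩)
      · exact Or.inr ⟨hq, i, ⟨by omega, hiK⟩, hpre⟩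
    · rintro ((⟨hq, i, hi, hpre⟩ | ⟨hq, i, hi, hpre⟩) | ⟨hq, i, hi, hpre⟩) <;>
        exact ⟨hq, i, Finset.mem_range.2 (index_lt hz hq hpre), hpre⟩
  have hdsub : DesZ S π ⊆ S := DesZ_subset
  have hcover : S = T1 ∪ T2 ∪ T3 ∪ W := by
    rw [hWdef, ← hdes3]
    exact (Set.union_diff_cancel hdsub).symm
  -- disjointness
  have d12 : Disjoint T1 T2 := PieceZ_disjoint (by intro i j h1 h2; omega)
  have d13 : Disjoint T1 T3 := PieceZ_disjoint (by intro i j h1 h2; omega)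
  have d23 : Disjoint T2 T3 := PieceZ_disjoint (by intro i j h1 h2; omega)
  have hsubdes : ∀ {P : ℕ → Prop}, PieceZ S π P ⊆ DesZ S π := by
    rintro P q ⟨hq, i, hi, hpre⟩; exact ⟨hq, i, hpre⟩
  have hdisjW : ∀ {X : Set (List ℕ)}, X ⊆ DesZ S π → Disjoint X W :=
    fun {X} hX => Disjoint.mono_left hX (Set.disjoint_sdiff_right)
  -- W is a zone
  have hWzone : IsZone t W ∧ CleanZ W := by
    rcases hWpart with hWe | hπS
    · rw [hWe]; exact ⟨zone_empty, clean_empty⟩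
    · obtain ⟨h1, h2, h3⟩ := above_zone hz hcl hπS (fun x hx => hsubdes (hportmid hx))
      exact ⟨h1, h2⟩
  -- finiteness and cards
  have hfin1 : T1.Finite := hfin.subset PieceZ_subset
  have hfin2 : T2.Finite := hfin.subset PieceZ_subset
  have hfin3 : T3.Finite := hfin.subset PieceZ_subset
  have hfinW : W.Finite := hfin.subset Set.diff_subset
  have hsum12 : (T1 ∪ T2).ncard = T1.ncard + T2.ncard := Set.ncard_union_eq d12 hfin1 hfin2
  have hsum123 : (T1 ∪ T2 ∪ T3).ncard = T1.ncard + T2.ncard + T3.ncard := by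
    rw [Set.ncard_union_eq (Set.disjoint_union_left.2 ⟨d13, d23⟩) (hfin1.union hfin2) hfin3,
      hsum12]
  have hdescard : (DesZ S π).ncard = T1.ncard + T2.ncard + T3.ncard := by
    rw [hdes3, hsum123]
  have htot : T1.ncard + T2.ncard + T3.ncard + W.ncard = S.ncard := by
    have h1 : (S \ DesZ S π).ncard + (DesZ S π).ncard = S.ncard :=
      Set.ncard_diff_add_ncard_of_subset hdsub hfin
    have h2 : W.ncard = (S \ DesZ S π).ncard := rfl
    omega
  -- recursive partitions
  obtain ⟨Z1, hpart1, hsz1, hxw1, hxs1⟩ := getC T1 PieceZ_subset hz1 hcl1 (by omega)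
  obtain ⟨Z3, hpart3, hsz3, hxw3, hxs3⟩ := getC T3 PieceZ_subset hz3 hcl3 (by omega)
  obtain ⟨ZW, hpartW, hszW, hxwW, hxsW⟩ := getC W Set.diff_subset hWzone.1 hWzone.2 (by omega)
  obtain ⟨Z2, hpart2, hcard2, hmem2⟩ := partition_single hz2
  -- ports of side pieces are empty
  have hpe : ∀ (P : ℕ → Prop), Ports t (PieceZ S π P) ⊆ Ports t S →
      Disjoint (PieceZ S π P) T2 → Ports t (PieceZ S π P) = ∅ := by
    intro P hsub hdisj
    apply Set.eq_empty_iff_forall_notMem.2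
    intro q hq
    exact Set.disjoint_left.1 hdisj hq.1 (hportmid (hsub hq))
  have hX1 : m * Z1.card ≤ m ∨ m * Z1.card + 4 * m ≤ 8 * T1.ncard :=
    hxs1 (hpe _ hp1 d12)
  have hX3 : m * Z3.card ≤ m ∨ m * Z3.card + 4 * m ≤ 8 * T3.ncard :=
    hxs3 (hpe _ hp3 d23.symm)
  have hX2 : m * Z2.card ≤ m := by
    calc m * Z2.card ≤ m * 1 := Nat.mul_le_mul_left m hcard2
    _ = m := Nat.mul_one m
  -- assemble
  have hd3W : Disjoint (T1 ∪ T2 ∪ T3) W := by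
    refine hdisjW ?_
    rw [← hdes3]
  have hpartAll : IsZonePartition t S (Z1 ∪ Z2 ∪ Z3 ∪ ZW) := by
    rw [hcover]
    exact partition_union (partition_union (partition_union hpart1 hpart2 d12) hpart3
      (Set.disjoint_union_left.2 ⟨d13, d23⟩)) hpartW hd3W
  have hcardle : (Z1 ∪ Z2 ∪ Z3 ∪ ZW).card ≤ Z1.card + Z2.card + Z3.card + ZW.card := by
    calc (Z1 ∪ Z2 ∪ Z3 ∪ ZW).card ≤ (Z1 ∪ Z2 ∪ Z3).card + ZW.card := Finset.card_union_le _ _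
    _ ≤ ((Z1 ∪ Z2).card + Z3.card) + ZW.card := by
        have := Finset.card_union_le (Z1 ∪ Z2) Z3; omega
    _ ≤ Z1.card + Z2.card + Z3.card + ZW.card := by
        have := Finset.card_union_le Z1 Z2; omega
  have hmul : m * (Z1 ∪ Z2 ∪ Z3 ∪ ZW).card ≤
      m * Z1.card + m * Z2.card + m * Z3.card + m * ZW.card := by
    calc m * (Z1 ∪ Z2 ∪ Z3 ∪ ZW).card
        ≤ m * (Z1.card + Z2.card + Z3.card + ZW.card) := Nat.mul_le_mul_left m hcardle
    _ = m * Z1.card + m * Z2.card + m * Z3.card + m * ZW.card := by ring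
  have hdlow : m ≤ T1.ncard + T2.ncard + T3.ncard := by omega
  have hnlow : m < T1.ncard + T2.ncard + T3.ncard + W.ncard := by omega
  have hacct := acct m (m - m / 2) T1.ncard T2.ncard T3.ncard W.ncard
    (m * Z1.card) (m * Z2.card) (m * Z3.card) (m * ZW.card)
    (m * (Z1 ∪ Z2 ∪ Z3 ∪ ZW).card) hm (by omega) hmul hX2 hs2m hX1 hX3 hxwW hdlow hnlow
  refine ⟨Z1 ∪ Z2 ∪ Z3 ∪ ZW, hpartAll, ?_, ?_, ?_⟩
  · intro A hA
    rcases Finset.mem_union.1 hA with hA' | hAW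
    · rcases Finset.mem_union.1 hA' with hA'' | hA3
      · rcases Finset.mem_union.1 hA'' with hA1 | hA2
        · exact hsz1 A hA1
        · rw [hmem2 A hA2]; exact hs2m
      · exact hsz3 A hA3
    · exact hszW A hAW
  · rw [← htot]; exact hacct.1
  · intro hpS
    rw [← htot]; exact hacct.2 (hmed hpS)

/-- Main partition lemma for clean zones. -/
theorem main_clean (t : OTree α) (m : ℕ) (hm : 1 ≤ m) :
    ∀ n, ∀ S : Set (List ℕ), S.Finite → IsZone t S → CleanZ S → S.ncard ≤ n →
    ∃ Z : Finset (Set (List ℕ)), IsZonePartition t S Z ∧ (∀ A ∈ Z, A.ncard ≤ m) ∧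
      (S.ncard ≤ m → Z.card ≤ 1) ∧
      (m < S.ncard → m * Z.card + m ≤ 8 * S.ncard) ∧
      (m < S.ncard → Ports t S = ∅ → m * Z.card + 4 * m ≤ 8 * S.ncard) := by
  intro n
  induction n with
  | zero =>
    intro S hfin hz hcl hle
    have hS : S = ∅ := by
      rw [← Set.ncard_eq_zero hfin]; omega
    subst hS
    exact ⟨∅, partition_empty, by simp, fun _ => by simp, fun h => by simp at h,
      fun h => by simp at h⟩
  | succ n IH =>
    intro S hfin hz hcl hle
    by_cases hsmall : S.ncard ≤ m
    · obtain ⟨Z, hZ, hc1, hall⟩ := partition_single hz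
      exact ⟨Z, hZ, fun X hX => (hall X hX) ▸ hsmall, fun _ => hc1,
        fun hb => absurd hsmall (by omega), fun hb => absurd hsmall (by omega)⟩
    push_neg at hsmall
    have hbig : m < S.ncard := hsmall
    have hnn : S.ncard ≤ n + 1 := hle
    suffices hsuff : ∃ Z : Finset (Set (List ℕ)), IsZonePartition t S Z ∧
        (∀ A ∈ Z, A.ncard ≤ m) ∧ (m * Z.card + m ≤ 8 * S.ncard) ∧
        (Ports t S = ∅ → m * Z.card + 4 * m ≤ 8 * S.ncard) by
      obtain ⟨Z, h1, h2, h3, h4⟩ := hsuff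
      exact ⟨Z, h1, h2, fun hsm => absurd hsm (by omega), fun _ => h3, fun _ hp => h4 hp⟩
    have getC : ∀ X : Set (List ℕ), X ⊆ S → IsZone t X → CleanZ X → X.ncard ≤ n →
        ∃ ZX : Finset (Set (List ℕ)), IsZonePartition t X ZX ∧ (∀ A ∈ ZX, A.ncard ≤ m) ∧
          (m * ZX.card ≤ m ∨ m * ZX.card + m ≤ 8 * X.ncard) ∧
          (Ports t X = ∅ → (m * ZX.card ≤ m ∨ m * ZX.card + 4 * m ≤ 8 * X.ncard)) := by
      intro X hXS hzX hclX hlen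
      obtain ⟨ZX, h1, h2, h3, h4, h5⟩ := IH X (hfin.subset hXS) hzX hclX hlen
      have hone : X.ncard ≤ m → m * ZX.card ≤ m := by
        intro hle'
        calc m * ZX.card ≤ m * 1 := Nat.mul_le_mul_left m (h3 hle')
        _ = m := Nat.mul_one m
      refine ⟨ZX, h1, h2, ?_, fun hp => ?_⟩
      · rcases le_or_gt X.ncard m with hle' | hlt
        · exact Or.inl (hone hle')
        · exact Or.inr (h4 hlt)
      · rcases le_or_gt X.ncard m with hle' | hlt
        · exact Or.inl (hone hle')
        · exact Or.inr (h5 hlt hp)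
    by_cases hports : Ports t S = ∅
    · -- portless
      by_cases hH : ∃ p, p ∈ S ∧ m < (SubZ S p).ncard
      · -- a heavy node exists: pick a deepest one
        obtain ⟨p, hpHH, hpmax⟩ := Set.Finite.exists_maximalFor (fun q : List ℕ => q.length)
          {q | q ∈ S ∧ m < (SubZ S q).ncard} (hfin.subset (fun q hq => hq.1)) hH
        obtain ⟨hpS, hpheavy⟩ := hpHH
        have h2card : 1 < (SubZ S p).ncard := by omega
        obtain ⟨q1, q2, hq1, hq2, hne⟩ :=
          (Set.one_lt_ncard_iff (hfin.subset SubZ_subset)).1 h2card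
        have hdesc : ∃ q, q ∈ S ∧ q ≠ p ∧ p <+: q := by
          rcases eq_or_ne q1 p with rfl | hq1p
          · exact ⟨q2, hq2.1, fun h => hne h.symm, hq2.2⟩
          · exact ⟨q1, hq1.1, hq1p, hq1.2⟩
        obtain ⟨qd, hqdS, hqdne, hqdpre⟩ := hdesc
        have hchild : ∀ i < numChildren t p, p ++ [i] ∈ S :=
          children_mem hz hcl hpS hqdS hqdne hqdpre
        have hmem : ∀ i, ∀ q ∈ S, p ++ [i] <+: q → p ++ [i] ∈ S :=
          fun i q hq hpre => hchild i (index_lt hz hq hpre)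
        have hszch : ∀ i < numChildren t p, (SubZ S (p ++ [i])).ncard ≤ m := by
          intro i hi
          by_contra hgt
          push_neg at hgt
          have hmm := hpmax (j := p ++ [i]) ⟨hchild i hi, hgt⟩ (by simp)
          simp at hmm
        have hdes_sum : (DesZ S p).ncard =
            ∑ i ∈ Finset.range (numChildren t p), (SubZ S (p ++ [i])).ncard := by
          rw [DesZ_eq_pieceZ hz, ncard_pieceZ_finset hfin]
        have hsubcard : (SubZ S p).ncard = (DesZ S p).ncard + 1 := ncard_SubZ hfin hpS
        have hDes : m ≤ (DesZ S p).ncard := by omega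
        obtain ⟨lo, j, hloj, hjK, hge, hle2, hlo⟩ := greedy_scan m hm _ (numChildren t p)
          hszch (by rw [← hdes_sum]; exact hDes)
        have hT2card : (PieceZ S p (fun i => lo ≤ i ∧ i ≤ j)).ncard =
            ∑ i ∈ Finset.Icc lo j, (SubZ S (p ++ [i])).ncard := by
          rw [PieceZ_congr (Q := fun i => i ∈ Finset.Icc lo j)
            (fun i => (Finset.mem_Icc).symm), ncard_pieceZ_finset hfin]
        obtain ⟨Z, hZ1, hZ2, hZ3, hZ4⟩ := four_split hm hfin hz hcl hbig hnn getC p lo j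
          hloj hjK hmem (by omega) (by omega) (fun _ => by omega)
          (by rw [hports]; exact Set.empty_subset _) hDes (Or.inr hpS)
        exact ⟨Z, hZ1, hZ2, hZ3, hZ4⟩
      · -- no heavy node: the roots are all light
        push_neg at hH
        have hnil : [] ∉ S := by
          intro h0
          have hsubnil : SubZ S [] = S := by
            ext q; exact ⟨fun h => h.1, fun h => ⟨h, List.nil_prefix⟩⟩
          have := hH [] h0
          rw [hsubnil] at this
          omega
        have hSne : S.Nonempty := by
          rw [Set.nonempty_iff_ne_empty]
          rintro rfl
          simp at hbig
        obtain ⟨s0, hs0⟩ := hSne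
        obtain ⟨r0, hr0S, hr0pre, hr0top⟩ := exists_top hz s0 hs0
        have hr0ne : r0 ≠ [] := fun h => hnil (h ▸ hr0S)
        have hr0p : r0.dropLast ∉ S := hr0top.resolve_left hr0ne
        have hroot : ∀ q ∈ S, ∃ i, r0.dropLast ++ [i] <+: q ∧ r0.dropLast ++ [i] ∈ S := by
          intro q hq
          obtain ⟨r, hrS, hrpre, hrtop⟩ := exists_top hz q hq
          have hrne : r ≠ [] := fun h => hnil (h ▸ hrS)
          have hrp := hrtop.resolve_left hrne
          have hdd : r.dropLast = r0.dropLast := (hz.tops r hrS r0 hr0S hrne hr0ne hrp hr0p).1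
          refine ⟨r.getLastD 0, ?_, ?_⟩ <;> rw [← hdd, eq_dropLast_concat hrne]
          exacts [hrpre, hrS]
        have hmem : ∀ i, ∀ q ∈ S, r0.dropLast ++ [i] <+: q → r0.dropLast ++ [i] ∈ S := by
          intro i q hq hpre
          obtain ⟨i', hpre', hmem'⟩ := hroot q hq
          rwa [prefix_concat_inj hpre hpre']
        have hcoverS : DesZ S r0.dropLast = S := by
          apply Set.eq_of_subset_of_subset DesZ_subset
          intro q hq
          obtain ⟨i, hpre, -⟩ := hroot q hq
          exact ⟨hq, i, hpre⟩
        have hWe : S \ DesZ S r0.dropLast = ∅ := by rw [hcoverS]; simp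
        have hDes : m ≤ (DesZ S r0.dropLast).ncard := by rw [hcoverS]; omega
        have hszch : ∀ i < numChildren t r0.dropLast,
            (SubZ S (r0.dropLast ++ [i])).ncard ≤ m := by
          intro i hi
          by_cases hiS : r0.dropLast ++ [i] ∈ S
          · exact hH _ hiS
          · have hemp : SubZ S (r0.dropLast ++ [i]) = ∅ := by
              apply Set.eq_empty_iff_forall_notMem.2
              rintro q ⟨hq, hpre⟩
              exact hiS (hmem i q hq hpre)
            rw [hemp]
            simp
        have hdes_sum : (DesZ S r0.dropLast).ncard =
            ∑ i ∈ Finset.range (numChildren t r0.dropLast),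
              (SubZ S (r0.dropLast ++ [i])).ncard := by
          rw [DesZ_eq_pieceZ hz, ncard_pieceZ_finset hfin]
        obtain ⟨lo, j, hloj, hjK, hge, hle2, hlo⟩ := greedy_scan m hm _
          (numChildren t r0.dropLast) hszch (by rw [← hdes_sum]; exact hDes)
        have hT2card : (PieceZ S r0.dropLast (fun i => lo ≤ i ∧ i ≤ j)).ncard =
            ∑ i ∈ Finset.Icc lo j, (SubZ S (r0.dropLast ++ [i])).ncard := by
          rw [PieceZ_congr (Q := fun i => i ∈ Finset.Icc lo j)
            (fun i => (Finset.mem_Icc).symm), ncard_pieceZ_finset hfin]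
        obtain ⟨Z, hZ1, hZ2, hZ3, hZ4⟩ := four_split hm hfin hz hcl hbig hnn getC
          r0.dropLast lo j hloj hjK hmem (by omega) (by omega) (fun _ => by omega)
          (by rw [hports]; exact Set.empty_subset _) hDes (Or.inl hWe)
        exact ⟨Z, hZ1, hZ2, hZ3, hZ4⟩
    · -- there is a port c
      obtain ⟨c, hc⟩ := Set.nonempty_iff_ne_empty.2 hports
      have hcS : c ∈ S := hc.1
      have hsubc : SubZ S c = {c} := port_sub hz hcl hc
      have hccard : (SubZ S c).ncard = 1 := by rw [hsubc]; simp
      have hmed : Ports t S = ∅ → True := fun _ => trivial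
      have hHCfin : {u | u <+: c ∧ u ∈ S ∧ m < (SubZ S u).ncard}.Finite := by
        apply Set.Finite.subset ((Set.finite_Iic c.length).image (fun k => c.take k))
        rintro u ⟨hpre, -, -⟩
        exact ⟨u.length, by simpa using hpre.length_le, (List.prefix_iff_eq_take.1 hpre).symm⟩
      by_cases hHCne : {u | u <+: c ∧ u ∈ S ∧ m < (SubZ S u).ncard}.Nonempty
      · -- a heavy ancestor of the port exists: pick a deepest one
        obtain ⟨p, hpHC, hpmax⟩ := Set.Finite.exists_maximalFor (fun q : List ℕ => q.length)
          _ hHCfin hHCne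
        obtain ⟨hpc, hpS, hpheavy⟩ := hpHC
        have hpnec : p ≠ c := by
          intro h
          rw [h, hccard] at hpheavy
          omega
        obtain ⟨s, hs⟩ := hpc
        have hsne : s ≠ [] := by
          rintro rfl
          exact hpnec (by simpa using hs)
        obtain ⟨i0, rest, rfl⟩ := List.exists_cons_of_ne_nil hsne
        have hceq : c = p ++ [i0] ++ rest := by rw [← hs]; simp
        have hvc : p ++ [i0] <+: c := by rw [hceq]; exact ⟨rest, rfl⟩
        have hvS : p ++ [i0] ∈ S := mem_of_between hz hcl hpS hcS ⟨[i0], rfl⟩ hvc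
        have hchild : ∀ i < numChildren t p, p ++ [i] ∈ S :=
          children_mem hz hcl hpS hcS (fun h => hpnec h.symm) ⟨i0 :: rest, hs⟩
        have hmem : ∀ i, ∀ q ∈ S, p ++ [i] <+: q → p ++ [i] ∈ S :=
          fun i q hq hpre => hchild i (index_lt hz hq hpre)
        have hvsmall : (SubZ S (p ++ [i0])).ncard ≤ m := by
          by_contra hgt
          push_neg at hgt
          have hmm := hpmax (j := p ++ [i0]) ⟨hvc, hvS, hgt⟩ (by simp)
          simp at hmm
        have hi0K : i0 < numChildren t p := index_lt hz hcS hvc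
        have hT2eq : PieceZ S p (fun i => i0 ≤ i ∧ i ≤ i0) = SubZ S (p ++ [i0]) := by
          ext q; constructor
          · rintro ⟨hq, i, ⟨h1, h2⟩, hpre⟩
            have : i = i0 := le_antisymm h2 h1
            subst this
            exact ⟨hq, hpre⟩
          · rintro ⟨hq, hpre⟩
            exact ⟨hq, i0, ⟨le_refl i0, le_refl i0⟩, hpre⟩
        have hs2pos : 1 ≤ (SubZ S (p ++ [i0])).ncard := by
          have hpos : 0 < (SubZ S (p ++ [i0])).ncard :=
            (Set.ncard_pos (hfin.subset SubZ_subset)).2 ⟨p ++ [i0], hvS, List.prefix_refl _⟩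
          omega
        have hsubcard : (SubZ S p).ncard = (DesZ S p).ncard + 1 := ncard_SubZ hfin hpS
        have hDes : m ≤ (DesZ S p).ncard := by omega
        obtain ⟨Z, hZ1, hZ2, hZ3, hZ4⟩ := four_split hm hfin hz hcl hbig hnn getC p i0 i0
          (le_refl i0) hi0K hmem (by rw [hT2eq]; exact hvsmall) (by rw [hT2eq]; exact hs2pos)
          (fun hemp => by rw [hemp] at hc; exact absurd hc (Set.notMem_empty c))
          (fun x hx => by
            have hxc : x = c := hz.ports_ss hx hc
            subst hxc
            rw [hT2eq]
            exact ⟨hcS, hvc⟩) hDes (Or.inr hpS)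
        exact ⟨Z, hZ1, hZ2, hZ3, hZ4⟩
      · -- no heavy ancestor of the port
        have hHCe : ∀ u, u <+: c → u ∈ S → (SubZ S u).ncard ≤ m := by
          intro u h1 h2
          by_contra hgt
          push_neg at hgt
          exact hHCne ⟨u, h1, h2, hgt⟩
        have hnil : [] ∉ S := by
          intro h0
          have hsubnil : SubZ S [] = S := by
            ext q; exact ⟨fun h => h.1, fun h => ⟨h, List.nil_prefix⟩⟩
          have := hHCe [] List.nil_prefix h0
          rw [hsubnil] at this
          omega
        obtain ⟨r0, hr0S, hr0pre, hr0top⟩ := exists_top hz c hcS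
        have hr0ne : r0 ≠ [] := fun h => hnil (h ▸ hr0S)
        have hr0p : r0.dropLast ∉ S := hr0top.resolve_left hr0ne
        have hroot : ∀ q ∈ S, ∃ i, r0.dropLast ++ [i] <+: q ∧ r0.dropLast ++ [i] ∈ S := by
          intro q hq
          obtain ⟨r, hrS, hrpre, hrtop⟩ := exists_top hz q hq
          have hrne : r ≠ [] := fun h => hnil (h ▸ hrS)
          have hrp := hrtop.resolve_left hrne
          have hdd : r.dropLast = r0.dropLast := (hz.tops r hrS r0 hr0S hrne hr0ne hrp hr0p).1
          refine ⟨r.getLastD 0, ?_, ?_⟩ <;> rw [← hdd, eq_dropLast_concat hrne]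
          exacts [hrpre, hrS]
        have hmem : ∀ i, ∀ q ∈ S, r0.dropLast ++ [i] <+: q → r0.dropLast ++ [i] ∈ S := by
          intro i q hq hpre
          obtain ⟨i', hpre', hmem'⟩ := hroot q hq
          rwa [prefix_concat_inj hpre hpre']
        have hcoverS : DesZ S r0.dropLast = S := by
          apply Set.eq_of_subset_of_subset DesZ_subset
          intro q hq
          obtain ⟨i, hpre, -⟩ := hroot q hq
          exact ⟨hq, i, hpre⟩
        have hWe : S \ DesZ S r0.dropLast = ∅ := by rw [hcoverS]; simp
        have hDes : m ≤ (DesZ S r0.dropLast).ncard := by rw [hcoverS]; omega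
        have hr0eq : r0.dropLast ++ [r0.getLastD 0] = r0 := eq_dropLast_concat hr0ne
        have hjK : r0.getLastD 0 < numChildren t r0.dropLast :=
          index_lt hz hr0S (by rw [hr0eq])
        have hT2eq : PieceZ S r0.dropLast
            (fun i => r0.getLastD 0 ≤ i ∧ i ≤ r0.getLastD 0) = SubZ S r0 := by
          ext q; constructor
          · rintro ⟨hq, i, ⟨h1, h2⟩, hpre⟩
            have : i = r0.getLastD 0 := le_antisymm h2 h1
            subst this
            rw [hr0eq] at hpre
            exact ⟨hq, hpre⟩
          · rintro ⟨hq, hpre⟩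
            exact ⟨hq, r0.getLastD 0, ⟨le_refl _, le_refl _⟩, by rw [hr0eq]; exact hpre⟩
        have hs2m : (SubZ S r0).ncard ≤ m := hHCe r0 hr0pre hr0S
        have hs2pos : 1 ≤ (SubZ S r0).ncard := by
          have hpos : 0 < (SubZ S r0).ncard :=
            (Set.ncard_pos (hfin.subset SubZ_subset)).2 ⟨r0, hr0S, List.prefix_refl _⟩
          omega
        obtain ⟨Z, hZ1, hZ2, hZ3, hZ4⟩ := four_split hm hfin hz hcl hbig hnn getC
          r0.dropLast (r0.getLastD 0) (r0.getLastD 0) (le_refl _) hjK hmem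
          (by rw [hT2eq]; exact hs2m) (by rw [hT2eq]; exact hs2pos)
          (fun hemp => by rw [hemp] at hc; exact absurd hc (Set.notMem_empty c))
          (fun x hx => by
            have hxc : x = c := hz.ports_ss hx hc
            subst hxc
            rw [hT2eq]
            exact ⟨hcS, hr0pre⟩) hDes (Or.inl hWe)
        exact ⟨Z, hZ1, hZ2, hZ3, hZ4⟩

/-- The upper part of a dirty zone is a zone. -/
theorem up_zone (hz : IsZone t S) (h0 : [] ∈ S) {π : List ℕ} (hπ : π ∉ S)
    (hall : ∀ r ∈ S, r ≠ [] → r.dropLast ∉ S → r.dropLast = π) :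
    IsZone t (S \ PieceZ S π (fun i => π ++ [i] ∈ S)) ∧
    CleanZ (S \ PieceZ S π (fun i => π ++ [i] ∈ S)) := by
  set L := PieceZ S π (fun i => π ++ [i] ∈ S) with hL
  set U := S \ L with hU
  have hUsub : U ⊆ S := Set.diff_subset
  have key : ∀ q ∈ U, ∀ j, (q ++ [j] ∈ U ↔ q ++ [j] ∈ S) := by
    rintro q ⟨hq, hqL⟩ j
    refine ⟨fun h => hUsub h, fun h => ⟨h, ?_⟩⟩
    rintro ⟨-, i, hiS, hpre⟩
    have hle : (π ++ [i]).length ≤ (q ++ [j]).length := hpre.length_le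
    rcases Nat.lt_or_ge π.length q.length with hlt | hge
    · have hpq : π ++ [i] <+: q := List.prefix_of_prefix_length_le hpre
        (List.prefix_append q [j]) (by
          simp only [List.length_append, List.length_cons, List.length_nil]; omega)
      exact hqL ⟨hq, i, hiS, hpq⟩
    · have hlen : (π ++ [i]).length = (q ++ [j]).length := by
        simp only [List.length_append, List.length_cons, List.length_nil] at hle ⊢; omega
      have heq : π ++ [i] = q ++ [j] := hpre.eq_of_length hlen
      have : π = q := by
        have := congrArg List.dropLast heq
        rwa [List.dropLast_concat, List.dropLast_concat] at this
      exact hπ (this ▸ hq)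
  -- a parentless member of U leads to a contradiction
  have hplU : ∀ q ∈ U, q ≠ [] → q.dropLast ∈ U := by
    rintro q hqU hqne
    have hq := hqU.1
    by_cases hdS : q.dropLast ∈ S
    · refine ⟨hdS, ?_⟩
      rintro ⟨-, i, hiS, hpre⟩
      exact hqU.2 ⟨hq, i, hiS, hpre.trans (List.dropLast_prefix q)⟩
    · exfalso
      have hdd : q.dropLast = π := hall q hq hqne hdS
      have hqL : q ∈ L := by
        refine ⟨hq, q.getLastD 0, ?_, ?_⟩
        · show π ++ [q.getLastD 0] ∈ S
          rw [← hdd, eq_dropLast_concat hqne]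
          exact hq
        · show π ++ [q.getLastD 0] <+: q
          rw [← hdd, eq_dropLast_concat hqne]
      exact hqU.2 hqL
  refine ⟨⟨fun q hq => hz.nodes_mem (hUsub hq), ?_, ?_, ?_⟩, ?_⟩
  · intro q hq
    rcases hz.allOrNone (hUsub hq) with hallc | hnone
    · exact Or.inl fun j hj => (key q hq j).2 (hallc j hj)
    · exact Or.inr fun j hj h => hnone j hj (hUsub h)
  · have hsubp : Ports t U ⊆ Ports t S := by
      rintro q ⟨hq, hn0, hnc⟩
      exact ⟨hUsub hq, hn0, fun j hj hjS => hnc j hj ((key q hq j).2 hjS)⟩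
    exact hz.ports_ss.anti hsubp
  · intro q1 h1 q2 h2 hne1 hne2 hd1 hd2
    exact absurd (hplU q1 h1 hne1) hd1
  · rintro - q hq hqne
    exact hplU q hq hqne

/-- Partition lemma for arbitrary zones. -/
theorem main_any (t : OTree α) (m : ℕ) (hm : 1 ≤ m) (S : Set (List ℕ)) (hfin : S.Finite)
    (hz : IsZone t S) :
    ∃ Z : Finset (Set (List ℕ)), IsZonePartition t S Z ∧ (∀ A ∈ Z, A.ncard ≤ m) ∧
      (Z.card ≤ 1 ∨ m * Z.card ≤ 8 * S.ncard) := by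
  classical
  by_cases hsmall : S.ncard ≤ m
  · obtain ⟨Z, hZ, hc1, hall⟩ := partition_single hz
    exact ⟨Z, hZ, fun X hX => (hall X hX) ▸ hsmall, Or.inl hc1⟩
  push_neg at hsmall
  have hcount : ∀ X : Set (List ℕ), X.Finite → IsZone t X → CleanZ X →
      ∃ ZX : Finset (Set (List ℕ)), IsZonePartition t X ZX ∧ (∀ A ∈ ZX, A.ncard ≤ m) ∧
        (m * ZX.card ≤ m ∨ m * ZX.card + m ≤ 8 * X.ncard) := by
    intro X hf hzX hclX
    obtain ⟨ZX, h1, h2, h3, h4, -⟩ := main_clean t m hm X.ncard X hf hzX hclX le_rfl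
    refine ⟨ZX, h1, h2, ?_⟩
    rcases le_or_gt X.ncard m with hle' | hlt
    · left
      calc m * ZX.card ≤ m * 1 := Nat.mul_le_mul_left m (h3 hle')
      _ = m := Nat.mul_one m
    · exact Or.inr (h4 hlt)
  by_cases hcl : CleanZ S
  · obtain ⟨Z, h1, h2, h3⟩ := hcount S hfin hz hcl
    refine ⟨Z, h1, h2, Or.inr ?_⟩
    rcases h3 with h | h
    · omega
    · omega
  · -- dirty zone: split into the part below the re-entry roots and the rest
    rw [CleanZ] at hcl
    push_neg at hcl
    obtain ⟨h0, r0, hr0S, hr0ne, hr0p⟩ := hcl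
    set π := r0.dropLast with hπ
    have hall : ∀ r ∈ S, r ≠ [] → r.dropLast ∉ S → r.dropLast = π :=
      fun r hr hrne hrp => (hz.tops r hr r0 hr0S hrne hr0ne hrp hr0p).1
    set L := PieceZ S π (fun i => π ++ [i] ∈ S) with hLdef
    set U := S \ L with hUdef
    obtain ⟨hzL, hpL, hclL⟩ := pieceZ_zone hz π (fun i => π ++ [i] ∈ S)
      (fun i j l hi hj hil hlj => sib_mem hz hi hj hil hlj)
      (fun i hi q hq hpre => hi)
      (fun i hi hmi q hq r h1 h2 => mem_of_between_anchor hz hmi (concat_ne_nil π i)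
        (by rw [List.dropLast_concat]; exact hr0p) hq h1 h2)
    obtain ⟨hzU, hclU⟩ := up_zone hz h0 hr0p hall
    have hLsub : L ⊆ S := PieceZ_subset
    have hcover : S = U ∪ L := by
      rw [hUdef]
      rw [Set.diff_union_self]
      exact (Set.union_eq_self_of_subset_right hLsub).symm
    have hdisj : Disjoint U L := Set.disjoint_sdiff_left
    have hfinL : L.Finite := hfin.subset hLsub
    have hfinU : U.Finite := hfin.subset Set.diff_subset
    obtain ⟨ZL, hL1, hL2, hL3⟩ := hcount L hfinL hzL hclL
    obtain ⟨ZU, hU1, hU2, hU3⟩ := hcount U hfinU hzU hclU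
    have hsum : U.ncard + L.ncard = S.ncard := by
      have := Set.ncard_diff_add_ncard_of_subset hLsub hfin
      rw [← hUdef] at this
      exact this
    refine ⟨ZU ∪ ZL, by rw [hcover]; exact partition_union hU1 hL1 hdisj, ?_, Or.inr ?_⟩
    · intro A hA
      rcases Finset.mem_union.1 hA with h | h
      · exact hU2 A h
      · exact hL2 A h
    · have hcardle : (ZU ∪ ZL).card ≤ ZU.card + ZL.card := Finset.card_union_le _ _
      have hmul : m * (ZU ∪ ZL).card ≤ m * ZU.card + m * ZL.card := by
        calc m * (ZU ∪ ZL).card ≤ m * (ZU.card + ZL.card) := Nat.mul_le_mul_left m hcardle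
        _ = m * ZU.card + m * ZL.card := by ring
      omega

/-- Singletons are zones. -/
theorem singleton_zone (hz : IsZone t S) {p : List ℕ} (hp : p ∈ S) :
    IsZone t ({p} : Set (List ℕ)) := by
  refine ⟨?_, ?_, ?_, ?_⟩
  · rintro q rfl
    exact hz.nodes_mem hp
  · rintro q rfl
    refine Or.inr fun i hi h => ?_
    rw [Set.mem_singleton_iff] at h
    have := congrArg List.length h
    simp at this
  · rintro q ⟨hq, -⟩ r ⟨hr, -⟩
    rw [Set.mem_singleton_iff] at hq hr
    rw [hq, hr]
  · intro q1 h1 q2 h2 hne1 hne2 hd1 hd2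
    rw [Set.mem_singleton_iff] at h1 h2
    rw [h1, h2]
    have hne : p ≠ [] := h1 ▸ hne1
    refine ⟨rfl, fun i hi1 hi2 => ?_⟩
    have hieq : i = p.getLastD 0 := le_antisymm hi2 hi1
    subst hieq
    rw [eq_dropLast_concat hne]
    rfl

end ZoneTheory

end OTree


open OTree in
/-- a zone with `s` nodes can be partitioned into at most `10·s^θ`
zones, each of size at most `s^{1-θ}`, for any `0 < θ ≤ 1`. -/
theorem zone_partition {α : Type} (t : OTree α) (S : Set (List ℕ)) (θ : ℝ)
    (hθ : 0 < θ) (hθ1 : θ ≤ 1) (hzone : IsZone t S) :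
    ∃ Z : Finset (Set (List ℕ)),
      IsZonePartition t S Z ∧
      (Z.card : ℝ) ≤ 10 * (S.ncard : ℝ) ^ θ ∧
      ∀ A ∈ Z, (A.ncard : ℝ) ≤ (S.ncard : ℝ) ^ (1 - θ) := by
  classical
  have hfin : S.Finite := (nodes_finite t).subset (fun p hp => hzone.1 p hp)
  by_cases hs0 : S.ncard = 0
  · have hS : S = ∅ := by rw [← Set.ncard_eq_zero hfin]; exact hs0
    subst hS
    refine ⟨∅, partition_empty, ?_, by simp⟩
    rw [hs0]
    push_cast
    rw [Real.zero_rpow (ne_of_gt hθ)]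
    simp
  have hs1 : 1 ≤ S.ncard := by omega
  have hspos : (0:ℝ) < (S.ncard : ℝ) := by exact_mod_cast hs1
  have hs1R : (1:ℝ) ≤ (S.ncard : ℝ) := by exact_mod_cast hs1
  set x := (S.ncard : ℝ) ^ (1 - θ) with hx
  have hx1 : 1 ≤ x := Real.one_le_rpow hs1R (by linarith)
  have hxpos : (0:ℝ) < x := by linarith
  have hθpos : (0:ℝ) < (S.ncard : ℝ) ^ θ := Real.rpow_pos_of_pos hspos θ
  have hθ1R : (1:ℝ) ≤ (S.ncard : ℝ) ^ θ := Real.one_le_rpow hs1R (le_of_lt hθ)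
  have hsplit : (S.ncard : ℝ) ^ θ * x = (S.ncard : ℝ) := by
    rw [hx, ← Real.rpow_add hspos]
    norm_num
  by_cases hxle : x ≤ 10
  · -- singleton partition
    refine ⟨hfin.toFinset.image (fun p => ({p} : Set (List ℕ))), ⟨?_, ?_, ?_⟩, ?_, ?_⟩
    · intro A hA
      rw [Finset.mem_image] at hA
      obtain ⟨p, hp, rfl⟩ := hA
      rw [Set.Finite.mem_toFinset] at hp
      exact singleton_zone hzone hp
    · intro X hX Y hY hXY
      simp only [Finset.coe_image, Set.mem_image, Finset.mem_coe] at hX hY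
      obtain ⟨p, -, rfl⟩ := hX
      obtain ⟨q, -, rfl⟩ := hY
      have hpq : p ≠ q := fun h => hXY (by rw [h])
      exact Set.disjoint_singleton.2 hpq
    · ext q
      simp only [Set.mem_sUnion, Finset.coe_image, Set.mem_image, Finset.mem_coe,
        Set.Finite.mem_toFinset]
      constructor
      · rintro ⟨A, ⟨p, hp, rfl⟩, hq⟩
        rw [Set.mem_singleton_iff] at hq
        exact hq ▸ hp
      · intro hq
        exact ⟨{q}, ⟨q, hq, rfl⟩, rfl⟩
    · have hcard : (hfin.toFinset.image (fun p => ({p} : Set (List ℕ)))).card = S.ncard := by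
        rw [Finset.card_image_of_injective _ (fun a b h => by
          rwa [Set.singleton_eq_singleton_iff] at h)]
        exact (Set.ncard_eq_toFinset_card S hfin).symm
      rw [hcard]
      calc (S.ncard : ℝ) = (S.ncard : ℝ) ^ θ * x := hsplit.symm
      _ ≤ (S.ncard : ℝ) ^ θ * 10 := mul_le_mul_of_nonneg_left hxle (le_of_lt hθpos)
      _ = 10 * (S.ncard : ℝ) ^ θ := by ring
    · intro A hA
      rw [Finset.mem_image] at hA
      obtain ⟨p, hp, rfl⟩ := hA
      rw [Set.ncard_singleton]
      exact_mod_cast hx1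
  · -- use the combinatorial partition with m := ⌊x⌋
    push_neg at hxle
    set m := ⌊x⌋₊ with hmdef
    have hm10 : 10 ≤ m := Nat.le_floor (by push_cast; linarith)
    have hm1 : 1 ≤ m := by omega
    have hmlex : (m : ℝ) ≤ x := Nat.floor_le (le_of_lt hxpos)
    have hmgt : x - 1 < (m : ℝ) := Nat.sub_one_lt_floor x
    obtain ⟨Z, hZ1, hZ2, hZ3⟩ := main_any t m hm1 S hfin hzone
    refine ⟨Z, hZ1, ?_, ?_⟩
    · rcases hZ3 with hone | hbound
      · have : (Z.card : ℝ) ≤ 1 := by exact_mod_cast hone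
        calc (Z.card : ℝ) ≤ 1 := this
        _ ≤ 10 * (S.ncard : ℝ) ^ θ := by linarith
      · have hcast : (Z.card : ℝ) * (m : ℝ) ≤ 8 * (S.ncard : ℝ) := by
          have : ((m * Z.card : ℕ) : ℝ) ≤ ((8 * S.ncard : ℕ) : ℝ) := by exact_mod_cast hbound
          push_cast at this
          linarith
        -- Z.card * (x - 1) ≤ Z.card * m ≤ 8 s = 8 s^θ x
        have hZnn : (0:ℝ) ≤ (Z.card : ℝ) := Nat.cast_nonneg _
        have h1 : (Z.card : ℝ) * (x - 1) ≤ 8 * ((S.ncard : ℝ) ^ θ) * x := by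
          have h2 : (Z.card : ℝ) * (x - 1) ≤ (Z.card : ℝ) * (m : ℝ) :=
            mul_le_mul_of_nonneg_left (le_of_lt hmgt) hZnn
          calc (Z.card : ℝ) * (x - 1) ≤ (Z.card : ℝ) * (m : ℝ) := h2
          _ ≤ 8 * (S.ncard : ℝ) := hcast
          _ = 8 * ((S.ncard : ℝ) ^ θ) * x := by linear_combination (-8 : ℝ) * hsplit
        have h3 : 8 * ((S.ncard : ℝ) ^ θ) * x ≤ 10 * ((S.ncard : ℝ) ^ θ) * (x - 1) := by
          have hux : ((S.ncard : ℝ) ^ θ) * 10 ≤ ((S.ncard : ℝ) ^ θ) * x :=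
            mul_le_mul_of_nonneg_left (le_of_lt hxle) (le_of_lt hθpos)
          nlinarith
        have h4 : (Z.card : ℝ) * (x - 1) ≤ (10 * ((S.ncard : ℝ) ^ θ)) * (x - 1) := by
          linarith
        have h5 : (0:ℝ) < x - 1 := by linarith
        exact le_of_mul_le_mul_right h4 h5
    · intro A hA
      have := hZ2 A hA
      calc (A.ncard : ℝ) ≤ (m : ℝ) := by exact_mod_cast this
      _ ≤ x := hmlex
end

section
/- Let w be a word over a pushdown alphabet with stack-height function s, and define h↘(i,d), for a call position i, as the smallest position j > i with s(j) + d = s(i) (undefined if none exists). Suppose a symbol at position ℓ is changed from a call symbol to a return symbol, so that the new stack-height function s' satisfies s'(i) = s(i) for i < ℓ and s'(i) = s(i) − 2 for i ≥ ℓ (assuming heights stay above 1). Then for positions j ≥ ℓ with witness position at most ℓ, the updated function satisfies h'↙(j,k) = h↙(j, k+2) when h↙(j,k) ≤ ℓ, and h'↙(j,k) = h↙(j,k) otherwise, where h↙(j,d) is defined symmetrically as 1 plus the largest position j' < j with s(j') + d = s(j). -/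
/-- `HlSpec s j d r`: `r = h↙(j,d)`, i.e. `r = j' + 1` where `j'` is the largest
position `j' < j` with `s(j') + d = s(j)`. -/
def HlSpec (s : ℕ → ℕ) (j d r : ℕ) : Prop :=
  ∃ j', r = j' + 1 ∧ j' < j ∧ s j' + d = s j ∧
    ∀ j'', j'' < j → s j'' + d = s j → j'' ≤ j'

/-- if a call at position `ℓ` is changed to a return, so that the
new stack-height function satisfies `s'(i) = s(i)` for `i < ℓ` and
`s'(i) = s(i) − 2` for `i ≥ ℓ` (heights staying above 1), then for positions
`j ≥ ℓ` with witness position at most `ℓ`: `h'↙(j,k) = h↙(j,k+2)` when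
`h↙(j,k) ≤ ℓ`, and `h'↙(j,k) = h↙(j,k)` otherwise. -/
theorem hl_update (s s' : ℕ → ℕ) (ℓ : ℕ)
    (hlt : ∀ i, i < ℓ → s' i = s i)
    (hge : ∀ i, ℓ ≤ i → s' i = s i - 2)
    (hfloor : ∀ i, ℓ ≤ i → 3 ≤ s i) :
    ∀ j k, ℓ ≤ j →
      (∀ r r2, HlSpec s j k r → r ≤ ℓ →
        HlSpec s j (k + 2) r2 → r2 ≤ ℓ → HlSpec s' j k r2) ∧
      (∀ r, HlSpec s j k r → ℓ < r → HlSpec s' j k r) := by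
  intro j k hj
  have hsj : s' j = s j - 2 := hge j hj
  have hfj : 3 ≤ s j := hfloor j hj
  constructor
  · rintro r r2 ⟨j', hr, hj'lt, hj'eq, hj'max⟩ hrℓ ⟨j2, hr2, hj2lt, hj2eq, hj2max⟩ hr2ℓ
    have hj'ℓ : j' < ℓ := by omega
    have hj2ℓ : j2 < ℓ := by omega
    refine ⟨j2, hr2, hj2lt, ?_, ?_⟩
    · rw [hlt j2 hj2ℓ, hsj]; omega
    · intro j'' h1 h2
      rcases lt_or_ge j'' ℓ with hc | hc
      · exact hj2max j'' h1 (by rw [hlt j'' hc] at h2; omega)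
      · exfalso
        have := hfloor j'' hc
        have := hge j'' hc
        have : j'' ≤ j' := hj'max j'' h1 (by omega)
        omega
  · rintro r ⟨j', hr, hj'lt, hj'eq, hj'max⟩ hrℓ
    have hj'ℓ : ℓ ≤ j' := by omega
    refine ⟨j', hr, hj'lt, ?_, ?_⟩
    · have := hfloor j' hj'ℓ
      rw [hge j' hj'ℓ, hsj]; omega
    · intro j'' h1 h2
      rcases lt_or_ge j'' ℓ with hc | hc
      · omega
      · have := hfloor j'' hc
        have := hge j'' hc
        exact hj'max j'' h1 (by omega)
end
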